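/- arXiv:math/9704202 — 4 statements merged into one kernel-verified Lean document; each statement's English description precedes it below -/
import Mathlib

section
/- Let Z be an infinite, coarsely connected, uniformly discrete space of bounded geometry. Then the natural map H₀^{uf}(Z; ℤ) → H₀^{uf}(Z; ℝ) is an isomorphism. -/
attribute [local instance] Classical.propDecidable


/-- The closed `r`-neighborhood of a set `A`. -/
def nbhd {Z : Type*} [MetricSpace Z] (r : ℝ) (A : Set Z) : Set Z :=
  {z | ∃ a ∈ A, dist z a ≤ r}

/-- The `r`-boundary of `A`: points outside `A` within distance `r` of `A`. -/
def bdry {Z : Type*} [MetricSpace Z] (r : ℝ) (A : Set Z) : Set Z :=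
  nbhd r A \ A

/-- Uniformly discrete metric space. -/
def UniformlyDiscrete (Z : Type*) [MetricSpace Z] : Prop :=
  ∃ r > (0 : ℝ), ∀ x y : Z, dist x y < r → x = y

/-- Bounded geometry: balls of radius `r` have at most `N_r` points. -/
def BoundedGeometry (Z : Type*) [MetricSpace Z] : Prop :=
  ∀ r : ℝ, ∃ N : ℕ, ∀ x : Z, {y : Z | dist y x ≤ r}.Finite ∧
    {y : Z | dist y x ≤ r}.ncard ≤ N

/-- A uniformly finite 1-chain with coefficients in a normed ring `R`:
coefficients on ordered pairs (edges), uniformly bounded, supported on edges of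
uniformly bounded length, and locally finite at each vertex. -/
def IsUFOneChain {Z : Type*} [MetricSpace Z] {R : Type*} [NormedRing R]
    (b : Z → Z → R) : Prop :=
  (∃ M : ℝ, ∀ z w : Z, ‖b z w‖ ≤ M) ∧
  (∃ l : ℝ, ∀ z w : Z, b z w ≠ 0 → dist z w ≤ l) ∧
  (∀ z : Z, {w : Z | b z w ≠ 0 ∨ b w z ≠ 0}.Finite)

/-- The boundary of a 1-chain at a vertex `z`: net flow into `z`. -/
noncomputable def ufBoundaryAt {Z : Type*} [MetricSpace Z] {R : Type*} [NormedRing R]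
    (b : Z → Z → R) (z : Z) : R :=
  (∑ᶠ w : Z, b w z) - ∑ᶠ w : Z, b z w

/-- A 0-chain `c` represents `0` in `H₀^{uf}(Z; R)` iff it is the boundary of a
uniformly finite 1-chain. -/
def UFBoundsZero {Z : Type*} [MetricSpace Z] {R : Type*} [NormedRing R]
    (c : Z → R) : Prop :=
  ∃ b : Z → Z → R, IsUFOneChain b ∧ ∀ z : Z, c z = ufBoundaryAt b z

/-- Coarse connectivity: points can be joined by chains with steps `< r`. -/
def CoarselyConnected (Z : Type*) [MetricSpace Z] : Prop :=
  ∃ r > (0 : ℝ), ∀ x y : Z, Relation.ReflTransGen (fun a b : Z => dist a b < r) x y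

namespace Stmt13


open Function Finset

variable {Z : Type*} [MetricSpace Z]

def reaches (z₀ : Z) (ρ : ℝ) (n : ℕ) (z : Z) : Prop :=
  ∃ f : ℕ → Z, f 0 = z₀ ∧ f n = z ∧ ∀ i < n, dist (f i) (f (i + 1)) < ρ

theorem reaches_zero {z₀ : Z} {ρ : ℝ} {z : Z} (h : reaches z₀ ρ 0 z) : z = z₀ := by
  obtain ⟨f, h0, hn, -⟩ := h; rw [← hn, h0]

theorem reaches_self (z₀ : Z) (ρ : ℝ) : reaches z₀ ρ 0 z₀ :=
  ⟨fun _ => z₀, rfl, rfl, fun i hi => absurd hi (Nat.not_lt_zero i)⟩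

theorem reaches_step {z₀ : Z} {ρ : ℝ} {n : ℕ} {y : Z} (h : reaches z₀ ρ n y) {z : Z}
    (hd : dist y z < ρ) : reaches z₀ ρ (n + 1) z := by
  obtain ⟨f, h0, hn, hs⟩ := h
  refine ⟨fun i => if i ≤ n then f i else z, by simp [h0], by simp, ?_⟩
  intro i hi
  rcases lt_or_eq_of_le (Nat.lt_succ_iff.mp hi) with h' | h'
  · simp only [if_pos (le_of_lt h'), if_pos (Nat.succ_le_of_lt h')]
    exact hs i h'
  · subst h'
    simp only [le_refl, if_pos]
    rw [if_neg (by omega), hn]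
    exact hd

def Reach (z₀ : Z) (ρ : ℝ) : Prop := ∀ z : Z, ∃ n, reaches z₀ ρ n z

variable {z₀ : Z} {ρ : ℝ}

noncomputable def DD (hr : Reach z₀ ρ) (z : Z) : ℕ := Nat.find (hr z)

theorem DD_spec (hr : Reach z₀ ρ) (z : Z) : reaches z₀ ρ (DD hr z) z := Nat.find_spec (hr z)

theorem DD_min (hr : Reach z₀ ρ) {z : Z} {n : ℕ} (h : reaches z₀ ρ n z) : DD hr z ≤ n :=
  Nat.find_le h

theorem DD_z₀ (hr : Reach z₀ ρ) : DD hr z₀ = 0 :=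
  Nat.le_zero.mp (DD_min hr (reaches_self _ _))

theorem DD_eq_zero (hr : Reach z₀ ρ) {z : Z} (h : DD hr z = 0) : z = z₀ :=
  reaches_zero (h ▸ DD_spec hr z)

theorem DD_pos (hr : Reach z₀ ρ) {z : Z} (hz : z ≠ z₀) : 0 < DD hr z :=
  Nat.pos_of_ne_zero fun h => hz (DD_eq_zero hr h)

theorem exists_par (hr : Reach z₀ ρ) {z : Z} (hz : z ≠ z₀) :
    ∃ y, dist y z < ρ ∧ reaches z₀ ρ (DD hr z - 1) y := by
  have hd : 0 < DD hr z := DD_pos hr hz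
  obtain ⟨f, h0, hn, hs⟩ := DD_spec hr z
  refine ⟨f (DD hr z - 1), ?_, f, h0, rfl, fun i hi => hs i (lt_of_lt_of_le hi (Nat.sub_le _ _))⟩
  have h1 : DD hr z - 1 + 1 = DD hr z := Nat.succ_pred_eq_of_pos hd
  have h2 := hs (DD hr z - 1) (by omega)
  rw [h1, hn] at h2
  exact h2

noncomputable def par (hr : Reach z₀ ρ) (z : Z) : Z :=
  if h : z = z₀ then z₀ else (exists_par hr h).choose

theorem par_z₀ (hr : Reach z₀ ρ) : par hr z₀ = z₀ := dif_pos rfl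

theorem par_dist (hr : Reach z₀ ρ) {z : Z} (hz : z ≠ z₀) : dist (par hr z) z < ρ := by
  rw [par, dif_neg hz]; exact (exists_par hr hz).choose_spec.1

theorem par_reaches (hr : Reach z₀ ρ) {z : Z} (hz : z ≠ z₀) :
    reaches z₀ ρ (DD hr z - 1) (par hr z) := by
  rw [par, dif_neg hz]; exact (exists_par hr hz).choose_spec.2

theorem DD_par (hr : Reach z₀ ρ) {z : Z} (hz : z ≠ z₀) : DD hr (par hr z) = DD hr z - 1 := by
  have h1 : DD hr (par hr z) ≤ DD hr z - 1 := DD_min hr (par_reaches hr hz)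
  have h2 : DD hr z ≤ DD hr (par hr z) + 1 :=
    DD_min hr (reaches_step (DD_spec hr (par hr z)) (par_dist hr hz))
  have := DD_pos hr hz
  omega

def desc (hr : Reach z₀ ρ) (z : Z) : Set Z := {w | ∃ k, (par hr)^[k] w = z}

theorem par_iterate_DD (hr : Reach z₀ ρ) : ∀ (n : ℕ) (w : Z), DD hr w = n → (par hr)^[n] w = z₀ := by
  intro n
  induction n with
  | zero => intro w h; simpa using DD_eq_zero hr h
  | succ m ih =>
    intro w h
    have hz : w ≠ z₀ := by intro e; rw [e, DD_z₀ hr] at h; omega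
    have h2 : DD hr (par hr w) = m := by rw [DD_par hr hz, h]; omega
    rw [Function.iterate_succ_apply]
    exact ih _ h2

theorem desc_z₀ (hr : Reach z₀ ρ) : desc hr z₀ = Set.univ :=
  Set.eq_univ_of_forall fun w => ⟨DD hr w, par_iterate_DD hr _ w rfl⟩

theorem desc_split (hr : Reach z₀ ρ) {z w : Z} (hw : w ∈ desc hr z) (hne : w ≠ z) :
    ∃ u, (par hr u = z ∧ u ≠ z₀) ∧ w ∈ desc hr u := by
  have hex : ∃ k, (par hr)^[k] w = z := hw
  have hspec : (par hr)^[Nat.find hex] w = z := Nat.find_spec hex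
  have hk0 : Nat.find hex ≠ 0 := by
    intro h; apply hne; rw [← hspec, h]; rfl
  obtain ⟨m, hm⟩ := Nat.exists_eq_succ_of_ne_zero hk0
  refine ⟨(par hr)^[m] w, ⟨?_, ?_⟩, ⟨m, rfl⟩⟩
  · rw [show par hr ((par hr)^[m] w) = (par hr)^[m+1] w from (Function.iterate_succ_apply' _ _ _).symm, ← Nat.succ_eq_add_one, ← hm, hspec]
  · intro h0
    have hz : z = z₀ := by
      rw [← hspec, hm, Function.iterate_succ_apply', h0, par_z₀ hr]
    have hmem : (par hr)^[m] w = z := by rw [h0, hz]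
    exact Nat.find_min hex (by omega) hmem

theorem children_finite (hr : Reach z₀ ρ) (hball : ∀ x : Z, {y : Z | dist y x ≤ ρ}.Finite)
    (z : Z) : {u : Z | par hr u = z ∧ u ≠ z₀}.Finite := by
  apply (hball z).subset
  rintro u ⟨h1, h2⟩
  have := par_dist hr h2
  rw [h1] at this
  simp only [Set.mem_setOf_eq]
  rw [dist_comm] at this
  exact le_of_lt this

theorem infChild (hr : Reach z₀ ρ) (hball : ∀ x : Z, {y : Z | dist y x ≤ ρ}.Finite) {z : Z}
    (hz : (desc hr z).Infinite) : ∃ u, (par hr u = z ∧ u ≠ z₀) ∧ (desc hr u).Infinite := by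
  by_contra h
  push_neg at h
  have hsub : desc hr z ⊆ {z} ∪ ⋃ u ∈ {u : Z | par hr u = z ∧ u ≠ z₀}, desc hr u := by
    intro w hw
    by_cases hwz : w = z
    · exact Or.inl hwz
    · obtain ⟨u, hu, hwu⟩ := desc_split hr hw hwz
      exact Or.inr (Set.mem_biUnion hu hwu)
  refine hz (Set.Finite.subset ?_ hsub)
  refine (Set.finite_singleton z).union ?_
  exact Set.Finite.biUnion (children_finite hr hball z) fun u hu => (h u hu)



variable {z₀ : Z} {ρ : ℝ}

noncomputable def nxt (hr : Reach z₀ ρ) (hball : ∀ x : Z, {y : Z | dist y x ≤ ρ}.Finite)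
    (z : Z) : Z :=
  if h : (desc hr z).Infinite then (infChild hr hball h).choose else par hr z

variable (hr : Reach z₀ ρ) (hball : ∀ x : Z, {y : Z | dist y x ≤ ρ}.Finite)

theorem nxt_inf {z : Z} (h : (desc hr z).Infinite) :
    par hr (nxt hr hball z) = z ∧ nxt hr hball z ≠ z₀ ∧ (desc hr (nxt hr hball z)).Infinite := by
  rw [nxt, dif_pos h]
  obtain ⟨h1, h2⟩ := (infChild hr hball h).choose_spec
  exact ⟨h1.1, h1.2, h2⟩

theorem nxt_fin {z : Z} (h : ¬(desc hr z).Infinite) : nxt hr hball z = par hr z := dif_neg h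

theorem desc_z₀_inf [Infinite Z] : (desc hr z₀).Infinite := by
  rw [desc_z₀ hr]; exact Set.infinite_univ

theorem nxt_ne_z₀_of_inf {z : Z} (h : (desc hr z).Infinite) : nxt hr hball z ≠ z₀ :=
  (nxt_inf hr hball h).2.1

theorem DD_nxt_inf {z : Z} (h : (desc hr z).Infinite) :
    DD hr (nxt hr hball z) = DD hr z + 1 := by
  obtain ⟨h1, h2, -⟩ := nxt_inf hr hball h
  have := DD_par hr h2
  rw [h1] at this
  have := DD_pos hr h2
  omega

theorem DD_nxt_fin [Infinite Z] {z : Z} (h : ¬(desc hr z).Infinite) :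
    z ≠ z₀ ∧ DD hr (nxt hr hball z) = DD hr z - 1 ∧ 0 < DD hr z := by
  have hz : z ≠ z₀ := by rintro rfl; exact h (desc_z₀_inf hr)
  rw [nxt_fin hr hball h]
  exact ⟨hz, DD_par hr hz, DD_pos hr hz⟩

theorem inf_iter {z : Z} (h : (desc hr z).Infinite) (k : ℕ) :
    (desc hr ((nxt hr hball)^[k] z)).Infinite ∧ DD hr ((nxt hr hball)^[k] z) = DD hr z + k := by
  induction k with
  | zero => simpa using h
  | succ m ih =>
    rw [Function.iterate_succ_apply']
    exact ⟨(nxt_inf hr hball ih.1).2.2, by rw [DD_nxt_inf hr hball ih.1, ih.2]; omega⟩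

theorem no_cycle [Infinite Z] (z : Z) {k : ℕ} (hk : 0 < k) : (nxt hr hball)^[k] z ≠ z := by
  by_cases hI : (desc hr z).Infinite
  · intro he
    have := (inf_iter hr hball hI k).2
    rw [he] at this
    omega
  · by_cases hJ : ∃ j ≤ k, (desc hr ((nxt hr hball)^[j] z)).Infinite
    · obtain ⟨j, hjk, hj⟩ := hJ
      intro he
      apply hI
      have h2 := (inf_iter hr hball hj (k - j)).1
      rw [← Function.iterate_add_apply, Nat.sub_add_cancel hjk, he] at h2
      exact h2
    · push_neg at hJ
      have key : ∀ j ≤ k, DD hr ((nxt hr hball)^[j] z) + j = DD hr z := by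
        intro j hj
        induction j with
        | zero => simp
        | succ m ih =>
          have hm : m ≤ k := by omega
          have h1 := ih hm
          have h2 := DD_nxt_fin hr hball (Set.not_infinite.mpr (hJ m hm))
          rw [Function.iterate_succ_apply']
          omega
      intro he
      have := key k le_rfl
      rw [he] at this
      omega

theorem nxt_dist [Infinite Z] (z : Z) : dist z (nxt hr hball z) < ρ := by
  by_cases hI : (desc hr z).Infinite
  · obtain ⟨h1, h2, -⟩ := nxt_inf hr hball hI
    have := par_dist hr h2
    rw [h1] at this
    exact this
  · have hz : z ≠ z₀ := by rintro rfl; exact hI (desc_z₀_inf hr)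
    rw [nxt_fin hr hball hI, dist_comm]
    exact par_dist hr hz

/-- backward orbit -/
def BO (z : Z) : Set Z := {w | ∃ k, (nxt hr hball)^[k] w = z}

/-- predecessors -/
def predS (z : Z) : Set Z := {w | nxt hr hball w = z}

theorem predS_finite [Infinite Z] (z : Z) : (predS hr hball z).Finite := by
  apply (hball z).subset
  intro w hw
  have := nxt_dist hr hball w
  rw [hw] at this
  exact le_of_lt this

theorem BO_eq (z : Z) : BO hr hball z = {z} ∪ ⋃ w ∈ predS hr hball z, BO hr hball w := by
  ext u
  constructor
  · rintro ⟨k, hk⟩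
    match k with
    | 0 => exact Or.inl hk
    | k + 1 =>
      rw [Function.iterate_succ_apply'] at hk
      exact Or.inr (Set.mem_biUnion (show nxt hr hball ((nxt hr hball)^[k] u) = z from hk) ⟨k, rfl⟩)
  · rintro (h | h)
    · exact ⟨0, h⟩
    · rw [Set.mem_iUnion₂] at h
      obtain ⟨w, hw, j, hj⟩ := h
      exact ⟨j + 1, by rw [Function.iterate_succ_apply', hj]; exact hw⟩

theorem BO_finite [Infinite Z] : ∀ (n : ℕ) (z : Z), DD hr z = n → (BO hr hball z).Finite := by
  intro n
  induction n using Nat.strong_induction_on with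
  | _ n IH =>
    intro z hz
    rw [BO_eq hr hball z]
    refine (Set.finite_singleton z).union ?_
    refine Set.Finite.biUnion (predS_finite hr hball z) ?_
    intro w hw
    by_cases hI : (desc hr w).Infinite
    · -- then nxt w is a child of w, so z ≠ z₀ and DD z = DD w + 1
      have h1 := DD_nxt_inf hr hball hI
      rw [show nxt hr hball w = z from hw] at h1
      exact IH (DD hr w) (by omega) w rfl
    · -- BO w ⊆ desc w which is finite
      apply (Set.not_infinite.mp hI).subset
      rintro u ⟨i, hi⟩
      have hnofin : ∀ j ≤ i, ¬ (desc hr ((nxt hr hball)^[j] u)).Infinite := by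
        intro j hj hInf
        apply hI
        have h2 := (inf_iter hr hball hInf (i - j)).1
        rwa [← Function.iterate_add_apply, Nat.sub_add_cancel hj, hi] at h2
      have hiter : ∀ j ≤ i, (nxt hr hball)^[j] u = (par hr)^[j] u := by
        intro j hj
        induction j with
        | zero => rfl
        | succ m ihm =>
          have hm : m ≤ i := by omega
          rw [Function.iterate_succ_apply', Function.iterate_succ_apply', ihm hm,
            ← ihm hm, nxt_fin hr hball (hnofin m hm), ihm hm]
      exact ⟨i, by rw [← hiter i le_rfl, hi]⟩



noncomputable def BF [Infinite Z] (z : Z) : Finset Z :=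
  (BO_finite hr hball (DD hr z) z rfl).toFinset

theorem mem_BF [Infinite Z] {w z : Z} :
    w ∈ BF hr hball z ↔ ∃ k, (nxt hr hball)^[k] w = z := by
  rw [BF, Set.Finite.mem_toFinset]; rfl

noncomputable def PF [Infinite Z] (z : Z) : Finset Z := (predS_finite hr hball z).toFinset

theorem mem_PF [Infinite Z] {w z : Z} : w ∈ PF hr hball z ↔ nxt hr hball w = z := by
  rw [PF, Set.Finite.mem_toFinset]; rfl

theorem BF_split [Infinite Z] (z : Z) :
    BF hr hball z = insert z ((PF hr hball z).biUnion (BF hr hball)) := by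
  ext u
  rw [mem_BF, Finset.mem_insert, Finset.mem_biUnion]
  constructor
  · rintro ⟨k, hk⟩
    match k with
    | 0 => exact Or.inl (by rw [← hk]; rfl)
    | k + 1 =>
      rw [Function.iterate_succ_apply'] at hk
      exact Or.inr ⟨(nxt hr hball)^[k] u, (mem_PF hr hball).mpr hk, (mem_BF hr hball).mpr ⟨k, rfl⟩⟩
  · rintro (rfl | ⟨w, hw, hu⟩)
    · exact ⟨0, rfl⟩
    · obtain ⟨j, hj⟩ := (mem_BF hr hball).mp hu
      exact ⟨j + 1, by rw [Function.iterate_succ_apply', hj]; exact (mem_PF hr hball).mp hw⟩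

theorem BF_not_mem [Infinite Z] (z : Z) : z ∉ (PF hr hball z).biUnion (BF hr hball) := by
  rw [Finset.mem_biUnion]
  rintro ⟨w, hw, hz⟩
  obtain ⟨j, hj⟩ := (mem_BF hr hball).mp hz
  refine no_cycle hr hball z (k := j + 1) (by omega) ?_
  rw [Function.iterate_succ_apply', hj]
  exact (mem_PF hr hball).mp hw

theorem BF_disj [Infinite Z] (z : Z) :
    (↑(PF hr hball z) : Set Z).PairwiseDisjoint (BF hr hball) := by
  intro w hw w' hw' hne
  rw [Function.onFun, Finset.disjoint_left]
  intro u hu hu'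
  obtain ⟨j, hj⟩ := (mem_BF hr hball).mp hu
  obtain ⟨j', hj'⟩ := (mem_BF hr hball).mp hu'
  have hwz : nxt hr hball w = z := (mem_PF hr hball).mp (by exact_mod_cast hw)
  have hwz' : nxt hr hball w' = z := (mem_PF hr hball).mp (by exact_mod_cast hw')
  have key : ∀ (a b : Z) (i i' : ℕ), (nxt hr hball)^[i] u = a → (nxt hr hball)^[i'] u = b →
      nxt hr hball a = z → nxt hr hball b = z → i < i' → False := by
    intro a b i i' ha hb haz hbz hii
    have h1 : (nxt hr hball)^[i' - i] a = b := by
      rw [← ha, ← Function.iterate_add_apply, Nat.sub_add_cancel (le_of_lt hii), hb]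
    have h2 : (nxt hr hball)^[i' - i] z = z := by
      have h3 : (nxt hr hball)^[i' - i + 1] a = z := by
        rw [Function.iterate_succ_apply', h1, hbz]
      rw [Function.iterate_succ_apply, haz] at h3
      exact h3
    exact no_cycle hr hball z (k := i' - i) (by omega) h2
  rcases lt_trichotomy j j' with h | h | h
  · exact key w w' j j' hj hj' hwz hwz' h
  · exact hne (by rw [← hj, h, hj'])
  · exact key w' w j' j hj' hj hwz' hwz h

noncomputable def TT [Infinite Z] (c : Z → ℝ) (z : Z) : ℝ := ∑ w ∈ BF hr hball z, c w

theorem TT_eq [Infinite Z] (c : Z → ℝ) (z : Z) :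
    TT hr hball c z = c z + ∑ w ∈ PF hr hball z, TT hr hball c w := by
  rw [TT, BF_split hr hball z, Finset.sum_insert (BF_not_mem hr hball z),
    Finset.sum_biUnion (BF_disj hr hball z)]
  rfl

noncomputable def bchain [Infinite Z] (c : Z → ℝ) : Z → Z → ℝ := fun z w =>
  if w = nxt hr hball z then -Int.fract (TT hr hball c z) else 0

theorem bchain_boundary [Infinite Z] (c : Z → ℝ) (z : Z) :
    ufBoundaryAt (bchain hr hball c) z
      = Int.fract (TT hr hball c z) - ∑ w ∈ PF hr hball z, Int.fract (TT hr hball c w) := by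
  have e2 : ∑ᶠ w, bchain hr hball c z w = -Int.fract (TT hr hball c z) := by
    rw [show bchain hr hball c z = fun w => if w = nxt hr hball z then -Int.fract (TT hr hball c z) else 0 from rfl]
    rw [finsum_eq_single _ (nxt hr hball z) (fun x hx => if_neg hx), if_pos rfl]
  have e1 : ∑ᶠ w, bchain hr hball c w z = ∑ w ∈ PF hr hball z, -Int.fract (TT hr hball c w) := by
    rw [finsum_eq_sum_of_support_subset]
    · exact Finset.sum_congr rfl fun w hw => by
        rw [bchain, if_pos ((mem_PF hr hball).mp hw).symm]
    · intro w hw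
      rw [Function.mem_support] at hw
      by_cases h : z = nxt hr hball w
      · exact Finset.mem_coe.mpr ((mem_PF hr hball).mpr h.symm)
      · exact absurd (show bchain hr hball c w z = 0 from if_neg h) hw
  rw [ufBoundaryAt, e1, e2, Finset.sum_neg_distrib]
  ring

theorem bchain_UF [Infinite Z] (c : Z → ℝ) : IsUFOneChain (bchain hr hball c) := by
  refine ⟨⟨1, ?_⟩, ⟨ρ, ?_⟩, ?_⟩
  · intro z w
    rw [bchain, Real.norm_eq_abs]
    split
    · rw [abs_neg, abs_of_nonneg (Int.fract_nonneg _)]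
      exact le_of_lt (Int.fract_lt_one _)
    · simp
  · intro z w hzw
    rw [bchain] at hzw
    by_cases h : w = nxt hr hball z
    · rw [h]; exact le_of_lt (nxt_dist hr hball z)
    · exact absurd (if_neg h) hzw
  · intro z
    apply Set.Finite.subset (Set.Finite.union (Set.finite_singleton (nxt hr hball z))
      (predS_finite hr hball z))
    intro w hw
    rcases hw with hw | hw
    · left
      by_cases h : w = nxt hr hball z
      · exact h
      · exact absurd (show bchain hr hball c z w = 0 from if_neg h) hw
    · right
      by_cases h : z = nxt hr hball w
      · exact h.symm
      · exact absurd (show bchain hr hball c w z = 0 from if_neg h) hw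

theorem PF_card [Infinite Z] {N : ℕ} (hN : ∀ x : Z, {y : Z | dist y x ≤ ρ}.ncard ≤ N) (z : Z) :
    (PF hr hball z).card ≤ N := by
  have h1 : (↑(PF hr hball z) : Set Z) = predS hr hball z := Set.Finite.coe_toFinset _
  calc (PF hr hball z).card = (↑(PF hr hball z) : Set Z).ncard := (Set.ncard_coe_finset _).symm
    _ ≤ {y : Z | dist y z ≤ ρ}.ncard := by
        rw [h1]
        refine Set.ncard_le_ncard ?_ (hball z)
        intro w hw
        have := nxt_dist hr hball w
        rw [hw] at this
        exact le_of_lt this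
    _ ≤ N := hN z

theorem surjMain {Z : Type*} [MetricSpace Z] (hinf : Infinite Z) (hcc : CoarselyConnected Z)
    (hbg : BoundedGeometry Z) (c : Z → ℝ) (hbd : ∃ K : ℝ, ∀ z, |c z| ≤ K) :
    ∃ c' : Z → ℤ, (∃ K : ℤ, ∀ z, |c' z| ≤ K) ∧ UFBoundsZero (fun z => c z - (c' z : ℝ)) := by
  haveI := hinf
  obtain ⟨K, hK⟩ := hbd
  obtain ⟨ρ, hρ, hchain⟩ := hcc
  obtain ⟨N, hN⟩ := hbg ρ
  set z₀ : Z := Classical.arbitrary Z with hz₀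
  have hr : Reach z₀ ρ := by
    intro z
    induction hchain z₀ z with
    | refl => exact ⟨0, reaches_self _ _⟩
    | tail hab hbc ih => obtain ⟨n, hn⟩ := ih; exact ⟨n + 1, reaches_step hn hbc⟩
  have hball : ∀ x : Z, {y : Z | dist y x ≤ ρ}.Finite := fun x => (hN x).1
  refine ⟨fun z => ⌊TT hr hball c z⌋ - ∑ w ∈ PF hr hball z, ⌊TT hr hball c w⌋, ?_, ?_⟩
  all_goals {
    have hfr : ∀ x : ℝ, Int.fract x = x - ⌊x⌋ := fun x => rfl
    have halg : ∀ z : Z, c z - ((⌊TT hr hball c z⌋ - ∑ w ∈ PF hr hball z, ⌊TT hr hball c w⌋ : ℤ) : ℝ)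
        = Int.fract (TT hr hball c z) - ∑ w ∈ PF hr hball z, Int.fract (TT hr hball c w) := by
      intro z
      have hc : c z = TT hr hball c z - ∑ w ∈ PF hr hball z, TT hr hball c w := by
        rw [TT_eq hr hball c z]; ring
      rw [hc]
      simp only [hfr, Finset.sum_sub_distrib]
      push_cast
      ring
    have hkey : ∀ z : Z, c z - ((⌊TT hr hball c z⌋ - ∑ w ∈ PF hr hball z, ⌊TT hr hball c w⌋ : ℤ) : ℝ)
        = ufBoundaryAt (bchain hr hball c) z := by
      intro z
      rw [bchain_boundary hr hball c z]
      exact halg z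
    first
    | · -- boundedness
        refine ⟨⌈K⌉ + N + 1, fun z => ?_⟩
        have hb1 : |ufBoundaryAt (bchain hr hball c) z| ≤ (N : ℝ) + 1 := by
          rw [bchain_boundary hr hball c z]
          have h2 : |∑ w ∈ PF hr hball z, Int.fract (TT hr hball c w)| ≤ (N : ℝ) := by
            calc |∑ w ∈ PF hr hball z, Int.fract (TT hr hball c w)|
                ≤ ∑ w ∈ PF hr hball z, |Int.fract (TT hr hball c w)| :=
                  Finset.abs_sum_le_sum_abs _ _
              _ ≤ ∑ _w ∈ PF hr hball z, (1 : ℝ) := by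
                  refine Finset.sum_le_sum fun w _ => ?_
                  rw [abs_of_nonneg (Int.fract_nonneg _)]
                  exact le_of_lt (Int.fract_lt_one _)
              _ = (PF hr hball z).card := by simp
              _ ≤ (N : ℝ) := by exact_mod_cast PF_card hr hball (fun x => (hN x).2) z
          have h3 : |Int.fract (TT hr hball c z)| ≤ 1 := by
            rw [abs_of_nonneg (Int.fract_nonneg _)]
            exact le_of_lt (Int.fract_lt_one _)
          calc |Int.fract (TT hr hball c z) - ∑ w ∈ PF hr hball z, Int.fract (TT hr hball c w)|
              ≤ |Int.fract (TT hr hball c z)|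
                + |∑ w ∈ PF hr hball z, Int.fract (TT hr hball c w)| := abs_sub _ _
            _ ≤ (N : ℝ) + 1 := by linarith
        dsimp only
        refine (@Int.cast_le ℝ _ _ _).mp ?_
        rw [Int.cast_abs]
        have h5 : ((⌊TT hr hball c z⌋ - ∑ w ∈ PF hr hball z, ⌊TT hr hball c w⌋ : ℤ) : ℝ)
            = c z - ufBoundaryAt (bchain hr hball c) z := by linarith [hkey z]
        rw [h5]
        calc |c z - ufBoundaryAt (bchain hr hball c) z|
            ≤ |c z| + |ufBoundaryAt (bchain hr hball c) z| := abs_sub _ _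
          _ ≤ K + ((N : ℝ) + 1) := add_le_add (hK z) hb1
          _ ≤ ((⌈K⌉ + N + 1 : ℤ) : ℝ) := by push_cast; linarith [Int.le_ceil K]
    | · -- UFBoundsZero
        exact ⟨bchain hr hball c, bchain_UF hr hball c, fun z => hkey z⟩
  }



def IsIntR (x : ℝ) : Prop := ∃ m : ℤ, x = (m : ℝ)

theorem IsIntR.add {x y : ℝ} (hx : IsIntR x) (hy : IsIntR y) : IsIntR (x + y) := by
  obtain ⟨m, rfl⟩ := hx; obtain ⟨n, rfl⟩ := hy; exact ⟨m + n, by push_cast; ring⟩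

theorem IsIntR.sub {x y : ℝ} (hx : IsIntR x) (hy : IsIntR y) : IsIntR (x - y) := by
  obtain ⟨m, rfl⟩ := hx; obtain ⟨n, rfl⟩ := hy; exact ⟨m - n, by push_cast; ring⟩

theorem IsIntR.zero : IsIntR 0 := ⟨0, by norm_num⟩
theorem IsIntR.one : IsIntR 1 := ⟨1, by norm_num⟩

theorem isIntR_sum {α : Type*} (s : Finset α) (f : α → ℝ) (h : ∀ e ∈ s, IsIntR (f e)) :
    IsIntR (∑ e ∈ s, f e) :=
  Finset.sum_induction f IsIntR (fun _ _ ha hb => ha.add hb) IsIntR.zero h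

theorem roundFlow {E V : Type*} [Fintype E] [DecidableEq V] (s t : E → V) (hst : ∀ e, s e ≠ t e) :
    ∀ (n : ℕ) (g : E → ℝ),
      (Finset.univ.filter fun e => ¬IsIntR (g e)).card = n →
      (∀ e, 0 ≤ g e ∧ g e ≤ 1) →
      (∀ v : V, IsIntR ((∑ e ∈ Finset.univ.filter fun e => t e = v, g e)
          - ∑ e ∈ Finset.univ.filter fun e => s e = v, g e)) →
      ∃ h : E → ℝ,
        (∀ e, h e = 0 ∨ h e = 1) ∧ (∀ e, IsIntR (g e) → h e = g e) ∧
        (∀ v : V,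
          (∑ e ∈ Finset.univ.filter fun e => t e = v, h e)
            - ∑ e ∈ Finset.univ.filter fun e => s e = v, h e
          = (∑ e ∈ Finset.univ.filter fun e => t e = v, g e)
            - ∑ e ∈ Finset.univ.filter fun e => s e = v, g e) := by
  intro n
  induction n using Nat.strong_induction_on with
  | _ n IH =>
  intro g hcard h01 hdiv
  by_cases h0 : (Finset.univ.filter fun e => ¬IsIntR (g e)) = ∅
  · refine ⟨g, ?_, fun _ _ => rfl, fun _ => rfl⟩
    intro e
    have he : IsIntR (g e) := by
      by_contra hc
      have : e ∈ (Finset.univ.filter fun e => ¬IsIntR (g e)) :=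
        Finset.mem_filter.mpr ⟨Finset.mem_univ e, hc⟩
      rw [h0] at this
      exact absurd this (Finset.notMem_empty e)
    obtain ⟨m, hm⟩ := he
    obtain ⟨hge, hle⟩ := h01 e
    rw [hm] at hge hle ⊢
    have hm0 : (0 : ℤ) ≤ m := by exact_mod_cast hge
    have hm1 : m ≤ 1 := by exact_mod_cast hle
    interval_cases m
    · left; norm_num
    · right; norm_num
  · set Frac := Finset.univ.filter fun e => ¬IsIntR (g e) with hFracDef
    have hFne : Frac.Nonempty := Finset.nonempty_of_ne_empty h0
    have hmemFrac : ∀ e, e ∈ Frac ↔ ¬IsIntR (g e) := by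
      intro e; rw [hFracDef, Finset.mem_filter]; simp
    have hopen : ∀ e ∈ Frac, 0 < g e ∧ g e < 1 := by
      intro e he
      have hni := (hmemFrac e).mp he
      obtain ⟨hge, hle⟩ := h01 e
      constructor
      · rcases lt_or_eq_of_le hge with h | h
        · exact h
        · exact absurd ⟨0, by rw [← h]; norm_num⟩ hni
      · rcases lt_or_eq_of_le hle with h | h
        · exact h
        · exact absurd ⟨1, by rw [h]; norm_num⟩ hni
    set Vf := Frac.image s ∪ Frac.image t with hVfDef
    have hsVf : ∀ e ∈ Frac, s e ∈ Vf := fun e he =>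
      Finset.mem_union_left _ (Finset.mem_image_of_mem s he)
    have htVf : ∀ e ∈ Frac, t e ∈ Vf := fun e he =>
      Finset.mem_union_right _ (Finset.mem_image_of_mem t he)
    -- degree lower bound
    have hdeg2 : ∀ v ∈ Vf, 2 ≤ (Frac.filter fun e => s e = v ∨ t e = v).card := by
      intro v hv
      have h1 : ∃ e ∈ Frac, s e = v ∨ t e = v := by
        rw [hVfDef, Finset.mem_union] at hv
        rcases hv with hv | hv
        · obtain ⟨e, he, hse⟩ := Finset.mem_image.mp hv
          exact ⟨e, he, Or.inl hse⟩
        · obtain ⟨e, he, hte⟩ := Finset.mem_image.mp hv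
          exact ⟨e, he, Or.inr hte⟩
      by_contra hlt
      push_neg at hlt
      have hge1 : 1 ≤ (Frac.filter fun e => s e = v ∨ t e = v).card := by
        obtain ⟨e, he, hor⟩ := h1
        exact Finset.card_pos.mpr ⟨e, Finset.mem_filter.mpr ⟨he, hor⟩⟩
      have hcard1 : (Frac.filter fun e => s e = v ∨ t e = v).card = 1 := by omega
      obtain ⟨e₀, he₀⟩ := Finset.card_eq_one.mp hcard1
      have he₀mem : e₀ ∈ Frac.filter fun e => s e = v ∨ t e = v := by
        rw [he₀]; exact Finset.mem_singleton_self e₀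
      have he₀Frac : e₀ ∈ Frac := (Finset.mem_filter.mp he₀mem).1
      have he₀or : s e₀ = v ∨ t e₀ = v := (Finset.mem_filter.mp he₀mem).2
      -- integer part sums
      have hI1 : IsIntR (∑ e ∈ (Finset.univ.filter fun e => t e = v).filter
          (fun e => ¬(e ∈ Frac)), g e) := by
        refine isIntR_sum _ _ fun e he => ?_
        have := (Finset.mem_filter.mp he).2
        by_contra hni
        exact this ((hmemFrac e).mpr hni)
      have hI2 : IsIntR (∑ e ∈ (Finset.univ.filter fun e => s e = v).filter
          (fun e => ¬(e ∈ Frac)), g e) := by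
        refine isIntR_sum _ _ fun e he => ?_
        have := (Finset.mem_filter.mp he).2
        by_contra hni
        exact this ((hmemFrac e).mpr hni)
      have hsplitA := Finset.sum_filter_add_sum_filter_not
        (Finset.univ.filter fun e => t e = v) (fun e => e ∈ Frac) g
      have hsplitB := Finset.sum_filter_add_sum_filter_not
        (Finset.univ.filter fun e => s e = v) (fun e => e ∈ Frac) g
      rcases he₀or with hs₀ | ht₀
      · have ht₀ne : t e₀ ≠ v := fun h => hst e₀ (by rw [hs₀, h])
        have hAfrac : (Finset.univ.filter fun e => t e = v).filter (fun e => e ∈ Frac) = ∅ := by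
          ext e
          simp only [Finset.mem_filter, Finset.mem_univ, true_and, Finset.notMem_empty,
            iff_false, not_and]
          intro hte heF
          have hmem : e ∈ Frac.filter fun e => s e = v ∨ t e = v :=
            Finset.mem_filter.mpr ⟨heF, Or.inr hte⟩
          rw [he₀, Finset.mem_singleton] at hmem
          exact ht₀ne (by rw [← hmem]; exact hte)
        have hBfrac : (Finset.univ.filter fun e => s e = v).filter (fun e => e ∈ Frac) = {e₀} := by
          ext e
          simp only [Finset.mem_filter, Finset.mem_univ, true_and, Finset.mem_singleton]
          constructor
          · rintro ⟨hse, heF⟩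
            have hmem : e ∈ Frac.filter fun e => s e = v ∨ t e = v :=
              Finset.mem_filter.mpr ⟨heF, Or.inl hse⟩
            rw [he₀, Finset.mem_singleton] at hmem
            exact hmem
          · rintro rfl
            exact ⟨hs₀, he₀Frac⟩
        rw [hAfrac, Finset.sum_empty, zero_add] at hsplitA
        rw [hBfrac, Finset.sum_singleton] at hsplitB
        apply (hmemFrac e₀).mp he₀Frac
        have hx : g e₀ = ((∑ e ∈ (Finset.univ.filter fun e => t e = v).filter
              (fun e => ¬(e ∈ Frac)), g e)
            - ∑ e ∈ (Finset.univ.filter fun e => s e = v).filter (fun e => ¬(e ∈ Frac)), g e)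
            - ((∑ e ∈ Finset.univ.filter fun e => t e = v, g e)
              - ∑ e ∈ Finset.univ.filter fun e => s e = v, g e) := by
          linarith [hsplitA, hsplitB]
        rw [hx]
        exact (hI1.sub hI2).sub (hdiv v)
      · have hs₀ne : s e₀ ≠ v := fun h => hst e₀ (by rw [h, ht₀])
        have hAfrac : (Finset.univ.filter fun e => t e = v).filter (fun e => e ∈ Frac) = {e₀} := by
          ext e
          simp only [Finset.mem_filter, Finset.mem_univ, true_and, Finset.mem_singleton]
          constructor
          · rintro ⟨hte, heF⟩
            have hmem : e ∈ Frac.filter fun e => s e = v ∨ t e = v :=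
              Finset.mem_filter.mpr ⟨heF, Or.inr hte⟩
            rw [he₀, Finset.mem_singleton] at hmem
            exact hmem
          · rintro rfl
            exact ⟨ht₀, he₀Frac⟩
        have hBfrac : (Finset.univ.filter fun e => s e = v).filter (fun e => e ∈ Frac) = ∅ := by
          ext e
          simp only [Finset.mem_filter, Finset.mem_univ, true_and, Finset.notMem_empty,
            iff_false, not_and]
          intro hse heF
          have hmem : e ∈ Frac.filter fun e => s e = v ∨ t e = v :=
            Finset.mem_filter.mpr ⟨heF, Or.inl hse⟩
          rw [he₀, Finset.mem_singleton] at hmem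
          exact hs₀ne (by rw [← hmem]; exact hse)
        rw [hAfrac, Finset.sum_singleton] at hsplitA
        rw [hBfrac, Finset.sum_empty, zero_add] at hsplitB
        apply (hmemFrac e₀).mp he₀Frac
        have hx : g e₀ = ((∑ e ∈ Finset.univ.filter fun e => t e = v, g e)
              - ∑ e ∈ Finset.univ.filter fun e => s e = v, g e)
            - ((∑ e ∈ (Finset.univ.filter fun e => t e = v).filter
              (fun e => ¬(e ∈ Frac)), g e)
            - ∑ e ∈ (Finset.univ.filter fun e => s e = v).filter (fun e => ¬(e ∈ Frac)), g e) := by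
          linarith [hsplitA, hsplitB]
        rw [hx]
        exact (hdiv v).sub (hI1.sub hI2)
    have hdegsum : ∑ v ∈ Vf, (Frac.filter fun e => s e = v ∨ t e = v).card = 2 * Frac.card := by
      have hsplit : ∀ v ∈ Vf, (Frac.filter fun e => s e = v ∨ t e = v).card
          = (Frac.filter fun e => s e = v).card + (Frac.filter fun e => t e = v).card := by
        intro v _
        rw [Finset.filter_or, Finset.card_union_of_disjoint]
        rw [Finset.disjoint_left]
        rintro e he1 he2
        exact hst e (by rw [(Finset.mem_filter.mp he1).2, (Finset.mem_filter.mp he2).2])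
      rw [Finset.sum_congr rfl hsplit, Finset.sum_add_distrib,
        ← Finset.card_eq_sum_card_fiberwise hsVf, ← Finset.card_eq_sum_card_fiberwise htVf]
      ring
    have hcount : Vf.card ≤ Frac.card := by
      have h2 : Vf.card * 2 ≤ ∑ v ∈ Vf, (Frac.filter fun e => s e = v ∨ t e = v).card := by
        have := Finset.card_nsmul_le_sum Vf
          (fun v => (Frac.filter fun e => s e = v ∨ t e = v).card) 2 hdeg2
        simpa [smul_eq_mul] using this
      omega
    have hVfne : Vf.Nonempty := by
      obtain ⟨e, he⟩ := hFne
      exact ⟨s e, hsVf e he⟩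
    set M : Matrix {v // v ∈ Vf} {e // e ∈ Frac} ℝ := fun v e =>
      (if t e.1 = v.1 then 1 else 0) - (if s e.1 = v.1 then 1 else 0) with hM
    set Φ := M.mulVecLin with hΦ
    have hΦapp : ∀ (θ : {e // e ∈ Frac} → ℝ) (v : {v // v ∈ Vf}),
        Φ θ v = (∑ e : {e // e ∈ Frac}, if t e.1 = v.1 then θ e else 0)
          - ∑ e : {e // e ∈ Frac}, if s e.1 = v.1 then θ e else 0 := by
      intro θ v
      rw [hΦ, Matrix.mulVecLin_apply, Matrix.mulVec, dotProduct]
      rw [← Finset.sum_sub_distrib]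
      refine Finset.sum_congr rfl fun e _ => ?_
      rw [hM]
      by_cases h1 : t e.1 = v.1 <;> by_cases h2 : s e.1 = v.1 <;>
        simp [h1, h2]
    have hsum0 : ∀ θ : {e // e ∈ Frac} → ℝ, ∑ v : {v // v ∈ Vf}, Φ θ v = 0 := by
      intro θ
      have hone : ∀ (x : V), x ∈ Vf →
          ∑ v : {v // v ∈ Vf}, (if x = v.1 then (1:ℝ) else 0) = 1 := by
        intro x hx
        rw [Finset.sum_coe_sort Vf (fun y => if x = y then (1:ℝ) else 0)]
        rw [Finset.sum_ite_eq]
        exact if_pos hx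
      calc ∑ v : {v // v ∈ Vf}, Φ θ v
          = ∑ v : {v // v ∈ Vf}, ∑ e : {e // e ∈ Frac},
            ((if t e.1 = v.1 then θ e else 0) - (if s e.1 = v.1 then θ e else 0)) := by
            refine Finset.sum_congr rfl fun v _ => ?_
            rw [hΦapp θ v, ← Finset.sum_sub_distrib]
        _ = ∑ e : {e // e ∈ Frac}, ∑ v : {v // v ∈ Vf},
            ((if t e.1 = v.1 then θ e else 0) - (if s e.1 = v.1 then θ e else 0)) :=
            Finset.sum_comm
        _ = 0 := by
            refine Finset.sum_eq_zero fun e _ => ?_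
            rw [Finset.sum_sub_distrib]
            have e1 : ∑ v : {v // v ∈ Vf}, (if t e.1 = v.1 then θ e else 0)
                = (∑ v : {v // v ∈ Vf}, if t e.1 = v.1 then (1:ℝ) else 0) * θ e := by
              rw [Finset.sum_mul]
              refine Finset.sum_congr rfl fun v _ => ?_
              by_cases h : t e.1 = v.1 <;> simp [h]
            have e2 : ∑ v : {v // v ∈ Vf}, (if s e.1 = v.1 then θ e else 0)
                = (∑ v : {v // v ∈ Vf}, if s e.1 = v.1 then (1:ℝ) else 0) * θ e := by
              rw [Finset.sum_mul]
              refine Finset.sum_congr rfl fun v _ => ?_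
              by_cases h : s e.1 = v.1 <;> simp [h]
            rw [e1, e2, hone (t e.1) (htVf e.1 e.2), hone (s e.1) (hsVf e.1 e.2)]
            ring
    have hker : LinearMap.ker Φ ≠ ⊥ := by
      intro hk
      have hinj : Function.Injective Φ := LinearMap.ker_eq_bot.mp hk
      set L : ({v // v ∈ Vf} → ℝ) →ₗ[ℝ] ℝ := ∑ v, LinearMap.proj v with hL
      have hLapp : ∀ x, L x = ∑ v : {v // v ∈ Vf}, x v := by
        intro x
        rw [hL]
        simp [LinearMap.sum_apply]
      have hrange : LinearMap.range Φ ≤ LinearMap.ker L := by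
        rintro x ⟨θ, rfl⟩
        rw [LinearMap.mem_ker, hLapp]
        exact hsum0 θ
      obtain ⟨v₀, hv₀⟩ := id hVfne
      have hLsurj : LinearMap.range L = ⊤ := by
        rw [LinearMap.range_eq_top]
        intro y
        refine ⟨fun v => if v = ⟨v₀, hv₀⟩ then y else 0, ?_⟩
        rw [hLapp]
        simp
      have hrn := LinearMap.finrank_range_add_finrank_ker L
      have hdom : Module.finrank ℝ ({v // v ∈ Vf} → ℝ) = Vf.card := by
        rw [Module.finrank_pi]
        exact Fintype.card_coe _
      have hrange1 : Module.finrank ℝ (LinearMap.range L) = 1 := by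
        rw [hLsurj, finrank_top]
        exact Module.finrank_self ℝ
      have hWrank : Module.finrank ℝ (LinearMap.range Φ) = Frac.card := by
        rw [LinearMap.finrank_range_of_inj hinj, Module.finrank_pi]
        exact Fintype.card_coe _
      have hle : Frac.card ≤ Vf.card - 1 := by
        rw [← hWrank]
        have := Submodule.finrank_mono hrange
        omega
      have hVf1 : 1 ≤ Vf.card := Finset.card_pos.mpr hVfne
      omega
    obtain ⟨θ, hθmem, hθne⟩ := (Submodule.ne_bot_iff _).mp hker
    have hΦθ : Φ θ = 0 := LinearMap.mem_ker.mp hθmem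
    set θe : E → ℝ := fun e => if h : e ∈ Frac then θ ⟨e, h⟩ else 0 with hθeDef
    have hθe_zero : ∀ e, e ∉ Frac → θe e = 0 := by
      intro e he; rw [hθeDef]; exact dif_neg he
    have hθe_frac : ∀ (e : {e // e ∈ Frac}), θe e.1 = θ e := by
      intro e; rw [hθeDef]; simp
    have hconv : ∀ (f : E → V) (v : V), ∑ e ∈ Finset.univ.filter (fun e => f e = v), θe e
        = ∑ e : {e // e ∈ Frac}, (if f e.1 = v then θ e else 0) := by
      intro f v
      rw [Finset.sum_filter]
      have h1 : ∑ e ∈ Finset.univ, (if f e = v then θe e else 0)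
          = ∑ e ∈ Frac, (if f e = v then θe e else 0) := by
        refine (Finset.sum_subset (Finset.subset_univ Frac) ?_).symm
        intro e _ he
        rw [hθe_zero e he, ite_self]
      rw [h1, ← Finset.sum_coe_sort Frac (fun e => if f e = v then θe e else 0)]
      refine Finset.sum_congr rfl fun e _ => ?_
      rw [hθe_frac e]
    have flow0 : ∀ v : V, (∑ e ∈ Finset.univ.filter fun e => t e = v, θe e)
        - (∑ e ∈ Finset.univ.filter fun e => s e = v, θe e) = 0 := by
      intro v
      rw [hconv t v, hconv s v]
      by_cases hv : v ∈ Vf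
      · have h := congrFun hΦθ ⟨v, hv⟩
        rw [hΦapp θ ⟨v, hv⟩] at h
        simpa using h
      · have e1 : ∑ e : {e // e ∈ Frac}, (if t e.1 = v then θ e else 0) = 0 :=
          Finset.sum_eq_zero fun e _ => if_neg fun h => hv (by rw [← h]; exact htVf e.1 e.2)
        have e2 : ∑ e : {e // e ∈ Frac}, (if s e.1 = v then θ e else 0) = 0 :=
          Finset.sum_eq_zero fun e _ => if_neg fun h => hv (by rw [← h]; exact hsVf e.1 e.2)
        rw [e1, e2, sub_zero]
    obtain ⟨ef, hef⟩ := Function.ne_iff.mp hθne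
    set tset : Finset E := Finset.univ.filter (fun e => θe e ≠ 0) with htsetDef
    have htset_ne : tset.Nonempty := by
      refine ⟨ef.1, Finset.mem_filter.mpr ⟨Finset.mem_univ _, ?_⟩⟩
      rw [hθe_frac ef]
      simpa using hef
    have htsetFrac : ∀ e ∈ tset, e ∈ Frac := by
      intro e he
      by_contra hne
      exact (Finset.mem_filter.mp he).2 (hθe_zero e hne)
    have htset_nz : ∀ e ∈ tset, θe e ≠ 0 := fun e he => (Finset.mem_filter.mp he).2
    set slack : E → ℝ := fun e => if 0 < θe e then (1 - g e) / θe e else g e / (-θe e)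
      with hslackDef
    have hslack_eq : ∀ e, slack e = if 0 < θe e then (1 - g e) / θe e else g e / (-θe e) :=
      fun _ => rfl
    set tstar : ℝ := (tset.image slack).min' (htset_ne.image slack) with htstarDef
    have hmin_le : ∀ e ∈ tset, tstar ≤ slack e := fun e he =>
      Finset.min'_le _ _ (Finset.mem_image_of_mem slack he)
    have hslack_pos : ∀ e ∈ tset, 0 < slack e := by
      intro e he
      have hop := hopen e (htsetFrac e he)
      rw [hslack_eq e]
      by_cases hpos : 0 < θe e
      · rw [if_pos hpos]
        exact div_pos (by linarith [hop.2]) hpos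
      · rw [if_neg hpos]
        have hneg : θe e < 0 := lt_of_le_of_ne (not_lt.mp hpos) (htset_nz e he)
        exact div_pos hop.1 (by linarith)
    obtain ⟨em, hem, hemeq⟩ := Finset.mem_image.mp ((tset.image slack).min'_mem (htset_ne.image slack))
    have htstar_pos : 0 < tstar := by
      rw [htstarDef, ← hemeq]
      exact hslack_pos em hem
    set g2 : E → ℝ := fun e => g e + tstar * θe e with hg2
    have hpres : ∀ e, e ∉ Frac → g2 e = g e := by
      intro e he
      rw [hg2]
      simp [hθe_zero e he]
    have h01' : ∀ e, 0 ≤ g2 e ∧ g2 e ≤ 1 := by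
      intro e
      by_cases hz : θe e = 0
      · rw [hg2]; simp only [hz, mul_zero, add_zero]; exact h01 e
      · have hemem : e ∈ tset := Finset.mem_filter.mpr ⟨Finset.mem_univ _, hz⟩
        have hop := hopen e (htsetFrac e hemem)
        have hsl := hmin_le e hemem
        rw [hg2]
        by_cases hpos : 0 < θe e
        · have hsl' : tstar ≤ (1 - g e) / θe e := by
            rw [hslack_eq e] at hsl; rwa [if_pos hpos] at hsl
          have h2 : tstar * θe e ≤ 1 - g e := (le_div_iff₀ hpos).mp hsl'
          have h3 : 0 < tstar * θe e := mul_pos htstar_pos hpos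
          constructor <;> simp only <;> linarith [hop.1]
        · have hneg : θe e < 0 := lt_of_le_of_ne (not_lt.mp hpos) hz
          have hsl' : tstar ≤ g e / (-θe e) := by
            rw [hslack_eq e] at hsl; rwa [if_neg hpos] at hsl
          have h2 : tstar * (-θe e) ≤ g e := (le_div_iff₀ (by linarith)).mp hsl'
          have h3 : 0 < tstar * (-θe e) := mul_pos htstar_pos (by linarith)
          constructor <;> simp only <;> linarith [hop.2]
    have hdiv' : ∀ v : V,
        (∑ e ∈ Finset.univ.filter fun e => t e = v, g2 e)
          - ∑ e ∈ Finset.univ.filter fun e => s e = v, g2 e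
        = (∑ e ∈ Finset.univ.filter fun e => t e = v, g e)
          - ∑ e ∈ Finset.univ.filter fun e => s e = v, g e := by
      intro v
      have ht2 : ∑ e ∈ Finset.univ.filter (fun e => t e = v), g2 e
          = (∑ e ∈ Finset.univ.filter (fun e => t e = v), g e)
            + tstar * ∑ e ∈ Finset.univ.filter (fun e => t e = v), θe e := by
        rw [Finset.mul_sum, ← Finset.sum_add_distrib]
      have hs2 : ∑ e ∈ Finset.univ.filter (fun e => s e = v), g2 e
          = (∑ e ∈ Finset.univ.filter (fun e => s e = v), g e)
            + tstar * ∑ e ∈ Finset.univ.filter (fun e => s e = v), θe e := by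
        rw [Finset.mul_sum, ← Finset.sum_add_distrib]
      rw [ht2, hs2]
      have h4 : ∑ e ∈ Finset.univ.filter (fun e => t e = v), θe e
          = ∑ e ∈ Finset.univ.filter (fun e => s e = v), θe e := by
        have h3 := flow0 v
        linarith
      rw [h4]
      ring
    have hIntpres : ∀ e, IsIntR (g e) → g2 e = g e := by
      intro e hInt
      exact hpres e fun hF => (hmemFrac e).mp hF hInt
    have hg2em : IsIntR (g2 em) := by
      have hz := htset_nz em hem
      by_cases hpos : 0 < θe em
      · have h5 : tstar = (1 - g em) / θe em := by
          rw [htstarDef, ← hemeq, hslack_eq em, if_pos hpos]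
        have hval : g2 em = 1 := by
          show g em + tstar * θe em = 1
          rw [h5]
          field_simp
          ring
        rw [hval]
        exact IsIntR.one
      · have h5 : tstar = g em / (-θe em) := by
          rw [htstarDef, ← hemeq, hslack_eq em, if_neg hpos]
        have hval : g2 em = 0 := by
          show g em + tstar * θe em = 0
          rw [h5]
          field_simp
          ring
        rw [hval]
        exact IsIntR.zero
    have hsub : (Finset.univ.filter fun e => ¬IsIntR (g2 e)) ⊆ Frac := by
      intro e he
      have hni := (Finset.mem_filter.mp he).2
      by_contra hne
      have : IsIntR (g e) := by
        by_contra hux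
        exact hne ((hmemFrac e).mpr hux)
      rw [← hIntpres e this] at this
      exact hni this
    have hdec : (Finset.univ.filter fun e => ¬IsIntR (g2 e)).card < n := by
      have hss : (Finset.univ.filter fun e => ¬IsIntR (g2 e)) ⊂ Frac := by
        refine (Finset.ssubset_iff_of_subset hsub).mpr ⟨em, htsetFrac em hem, ?_⟩
        intro hmm
        exact (Finset.mem_filter.mp hmm).2 hg2em
      have := Finset.card_lt_card hss
      omega
    obtain ⟨h, hh1, hh2, hh3⟩ := IH _ hdec g2 rfl h01' (fun v => by rw [hdiv' v]; exact hdiv v)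
    refine ⟨h, hh1, ?_, ?_⟩
    · intro e hInt
      rw [hh2 e (by rw [hIntpres e hInt]; exact hInt), hIntpres e hInt]
    · intro v
      rw [hh3 v, hdiv' v]



theorem ufBoundaryAt_eq_sum {Z : Type*} [MetricSpace Z] {R : Type*} [NormedRing R]
    (b : Z → Z → R) (z : Z) (F : Finset Z)
    (h1 : ∀ w, b w z ≠ 0 → w ∈ F) (h2 : ∀ w, b z w ≠ 0 → w ∈ F) :
    ufBoundaryAt b z = (∑ w ∈ F, b w z) - ∑ w ∈ F, b z w := by
  rw [ufBoundaryAt,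
    finsum_eq_sum_of_support_subset (fun w => b w z)
      (fun w hw => Finset.mem_coe.mpr (h1 w hw)),
    finsum_eq_sum_of_support_subset (fun w => b z w)
      (fun w hw => Finset.mem_coe.mpr (h2 w hw))]

set_option maxHeartbeats 2000000 in
theorem injMain {Z : Type*} [MetricSpace Z] (c : Z → ℤ)
    (h : UFBoundsZero (fun z => (c z : ℝ))) : UFBoundsZero c := by
  obtain ⟨b, ⟨⟨M, hM⟩, ⟨l, hl⟩, hloc⟩, hb⟩ := h
  set EF : Z → Finset Z := fun z => (hloc z).toFinset with hEFdef
  have memEF : ∀ z w, w ∈ EF z ↔ (b z w ≠ 0 ∨ b w z ≠ 0) := fun z w =>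
    (hloc z).mem_toFinset
  set β : Z → Z → ℝ := fun z w => Int.fract (b z w) with hβdef
  have hβ_eq : ∀ z w, β z w = Int.fract (b z w) := fun _ _ => rfl
  have hβ0 : ∀ z w, b z w = 0 → β z w = 0 := by
    intro z w hzw
    rw [hβ_eq, hzw, Int.fract_zero]
  have hβb : ∀ z w, β z w ≠ 0 → b z w ≠ 0 := fun z w hne hc => hne (hβ0 z w hc)
  set fl : Z → Z → ℤ := fun z w => ⌊b z w⌋ with hfldef
  have hfl_eq : ∀ z w, fl z w = ⌊b z w⌋ := fun _ _ => rfl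
  have hfl0 : ∀ z w, b z w = 0 → fl z w = 0 := by
    intro z w hzw
    rw [hfl_eq, hzw, Int.floor_zero]
  have hflb : ∀ z w, fl z w ≠ 0 → b z w ≠ 0 := fun z w hne hc => hne (hfl0 z w hc)
  have hbreal : ∀ z, (c z : ℝ) = (∑ w ∈ EF z, b w z) - ∑ w ∈ EF z, b z w := by
    intro z
    exact (hb z).trans (ufBoundaryAt_eq_sum b z (EF z)
      (fun w hw => (memEF z w).mpr (Or.inr hw))
      (fun w hw => (memEF z w).mpr (Or.inl hw)))
  set d : Z → ℤ := fun z => c z - ((∑ w ∈ EF z, fl w z) - ∑ w ∈ EF z, fl z w) with hddef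
  have hd_eq : ∀ z, d z = c z - ((∑ w ∈ EF z, fl w z) - ∑ w ∈ EF z, fl z w) := fun _ => rfl
  set inF : Z → Finset Z := fun z => ((EF z).erase z).filter (fun w => β w z ≠ 0) with hinFdef
  set outF : Z → Finset Z := fun z => ((EF z).erase z).filter (fun w => β z w ≠ 0)
    with houtFdef
  have mem_inF : ∀ z w, w ∈ inF z ↔ (w ∈ EF z ∧ w ≠ z ∧ β w z ≠ 0) := by
    intro z w
    rw [hinFdef]
    simp only [Finset.mem_filter, Finset.mem_erase]
    tauto
  have mem_outF : ∀ z w, w ∈ outF z ↔ (w ∈ EF z ∧ w ≠ z ∧ β z w ≠ 0) := by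
    intro z w
    rw [houtFdef]
    simp only [Finset.mem_filter, Finset.mem_erase]
    tauto
  have hdR : ∀ z, ((d z : ℤ) : ℝ) = (∑ w ∈ inF z, β w z) - ∑ w ∈ outF z, β z w := by
    intro z
    have h1 : ∑ w ∈ inF z, β w z = ∑ w ∈ (EF z).erase z, β w z := by
      rw [hinFdef]
      exact Finset.sum_filter_ne_zero _
    have h2 : ∑ w ∈ outF z, β z w = ∑ w ∈ (EF z).erase z, β z w := by
      rw [houtFdef]
      exact Finset.sum_filter_ne_zero _
    have h3 : (∑ w ∈ (EF z).erase z, β w z) - ∑ w ∈ (EF z).erase z, β z w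
        = (∑ w ∈ EF z, β w z) - ∑ w ∈ EF z, β z w := by
      by_cases hzz : z ∈ EF z
      · rw [← Finset.add_sum_erase (EF z) (fun w => β w z) hzz,
          ← Finset.add_sum_erase (EF z) (fun w => β z w) hzz]
        ring
      · rw [Finset.erase_eq_of_notMem hzz]
    have h4 : (∑ w ∈ EF z, β w z) - ∑ w ∈ EF z, β z w
        = ((∑ w ∈ EF z, b w z) - ∑ w ∈ EF z, b z w)
          - ((∑ w ∈ EF z, ((fl w z : ℤ) : ℝ)) - ∑ w ∈ EF z, ((fl z w : ℤ) : ℝ)) := by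
      have hterm : ∀ w, β w z = b w z - ((fl w z : ℤ) : ℝ) := fun w => rfl
      have hterm' : ∀ w, β z w = b z w - ((fl z w : ℤ) : ℝ) := fun w => rfl
      simp only [hterm, hterm', Finset.sum_sub_distrib]
      ring
    rw [h1, h2, h3, h4, ← hbreal z, hd_eq z]
    push_cast
    ring
  -- the compact space of 0/1 edge labelings
  set dvs : ((Z × Z) → Bool) → Z → ℤ := fun A z =>
    (∑ w ∈ inF z, (if A (w, z) = true then (1 : ℤ) else 0))
      - ∑ w ∈ outF z, (if A (z, w) = true then (1 : ℤ) else 0) with hdvsdef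
  have hdvs_eq : ∀ A z, dvs A z =
      (∑ w ∈ inF z, (if A (w, z) = true then (1 : ℤ) else 0))
        - ∑ w ∈ outF z, (if A (z, w) = true then (1 : ℤ) else 0) := fun _ _ => rfl
  set C : Z → Set ((Z × Z) → Bool) := fun z => {A | dvs A z = d z} with hCdef
  have hCclosed : ∀ z, IsClosed (C z) := by
    intro z
    have hcont : Continuous (fun A : (Z × Z) → Bool => dvs A z) := by
      have hc1 : Continuous (fun A : (Z × Z) → Bool =>
          ∑ w ∈ inF z, (if A (w, z) = true then (1 : ℤ) else 0)) := by
        refine continuous_finset_sum _ fun w _ => ?_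
        exact (continuous_of_discreteTopology
          (f := fun bl : Bool => if bl = true then (1:ℤ) else 0)).comp (continuous_apply (w, z))
      have hc2 : Continuous (fun A : (Z × Z) → Bool =>
          ∑ w ∈ outF z, (if A (z, w) = true then (1 : ℤ) else 0)) := by
        refine continuous_finset_sum _ fun w _ => ?_
        exact (continuous_of_discreteTopology
          (f := fun bl : Bool => if bl = true then (1:ℤ) else 0)).comp (continuous_apply (z, w))
      exact hc1.sub hc2
    have : C z = (fun A : (Z × Z) → Bool => dvs A z) ⁻¹' {d z} := rfl
    rw [this]
    exact IsClosed.preimage hcont isClosed_singleton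
  have hFIP : ∀ S : Finset Z, ∃ A : (Z × Z) → Bool, ∀ z ∈ S, dvs A z = d z := by
    intro S
    set ES : Finset (Z × Z) := S.biUnion (fun v =>
      ((inF v).image fun w => (w, v)) ∪ ((outF v).image fun w => (v, w))) with hESdef
    have memES : ∀ p : Z × Z, p ∈ ES ↔
        ((p.1 ∈ S ∨ p.2 ∈ S) ∧ p.1 ≠ p.2 ∧ β p.1 p.2 ≠ 0) := by
      intro p
      rw [hESdef]
      simp only [Finset.mem_biUnion, Finset.mem_union, Finset.mem_image]
      constructor
      · rintro ⟨v, hv, (⟨w, hw, rfl⟩ | ⟨w, hw, rfl⟩)⟩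
        · obtain ⟨hwEF, hwne, hwβ⟩ := (mem_inF v w).mp hw
          exact ⟨Or.inr hv, hwne, hwβ⟩
        · obtain ⟨hwEF, hwne, hwβ⟩ := (mem_outF v w).mp hw
          exact ⟨Or.inl hv, Ne.symm hwne, hwβ⟩
      · rintro ⟨hS, hne, hβne⟩
        rcases hS with h1 | h2
        · refine ⟨p.1, h1, Or.inr ⟨p.2, (mem_outF p.1 p.2).mpr
            ⟨(memEF _ _).mpr (Or.inl (hβb _ _ hβne)), Ne.symm hne, hβne⟩, rfl⟩⟩
        · refine ⟨p.2, h2, Or.inl ⟨p.1, (mem_inF p.2 p.1).mpr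
            ⟨(memEF _ _).mpr (Or.inr (hβb _ _ hβne)), hne, hβne⟩, rfl⟩⟩
    set sV : {p // p ∈ ES} → Option Z := fun e => if e.1.1 ∈ S then some e.1.1 else none
      with hsVdef
    set tV : {p // p ∈ ES} → Option Z := fun e => if e.1.2 ∈ S then some e.1.2 else none
      with htVdef
    have hsV_eq : ∀ e, sV e = if e.1.1 ∈ S then some e.1.1 else none := fun _ => rfl
    have htV_eq : ∀ e, tV e = if e.1.2 ∈ S then some e.1.2 else none := fun _ => rfl
    have hsV_some : ∀ (e) (x : Z), sV e = some x → e.1.1 = x ∧ x ∈ S := by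
      intro e x he
      rw [hsV_eq e] at he
      by_cases hm : e.1.1 ∈ S
      · rw [if_pos hm] at he
        have h2 := Option.some.inj he
        exact ⟨h2, by rwa [h2] at hm⟩
      · rw [if_neg hm] at he
        exact absurd he (by simp)
    have htV_some : ∀ (e) (x : Z), tV e = some x → e.1.2 = x ∧ x ∈ S := by
      intro e x he
      rw [htV_eq e] at he
      by_cases hm : e.1.2 ∈ S
      · rw [if_pos hm] at he
        have h2 := Option.some.inj he
        exact ⟨h2, by rwa [h2] at hm⟩
      · rw [if_neg hm] at he
        exact absurd he (by simp)
    have hstV : ∀ e, sV e ≠ tV e := by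
      intro e heq
      obtain ⟨hor, hne, -⟩ := (memES e.1).mp e.2
      rw [hsV_eq e, htV_eq e] at heq
      by_cases h1 : e.1.1 ∈ S <;> by_cases h2 : e.1.2 ∈ S
      · rw [if_pos h1, if_pos h2] at heq
        exact hne (Option.some.inj heq)
      · rw [if_pos h1, if_neg h2] at heq
        simp at heq
      · rw [if_neg h1, if_pos h2] at heq
        simp at heq
      · rcases hor with h | h
        · exact h1 h
        · exact h2 h
    set gE : {p // p ∈ ES} → ℝ := fun e => β e.1.1 e.1.2 with hgEdef
    have hgE_eq : ∀ e, gE e = β e.1.1 e.1.2 := fun _ => rfl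
    have h01E : ∀ e, 0 ≤ gE e ∧ gE e ≤ 1 := by
      intro e
      rw [hgE_eq, hβ_eq]
      exact ⟨Int.fract_nonneg _, le_of_lt (Int.fract_lt_one _)⟩
    have hmemT : ∀ x ∈ S, ∀ w ∈ inF x, ((w, x) : Z × Z) ∈ ES := by
      intro x hx w hw
      obtain ⟨h1, h2, h3⟩ := (mem_inF x w).mp hw
      exact (memES _).mpr ⟨Or.inr hx, h2, h3⟩
    have hmemS : ∀ x ∈ S, ∀ w ∈ outF x, ((x, w) : Z × Z) ∈ ES := by
      intro x hx w hw
      obtain ⟨h1, h2, h3⟩ := (mem_outF x w).mp hw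
      exact (memES _).mpr ⟨Or.inl hx, Ne.symm h2, h3⟩
    have hfibT : ∀ (F : Z × Z → ℝ) (x : Z), x ∈ S →
        ∑ e ∈ Finset.univ.filter (fun e : {p // p ∈ ES} => tV e = some x), F e.1
          = ∑ w ∈ inF x, F (w, x) := by
      intro F x hx
      refine Finset.sum_bij' (i := fun e _ => e.1.1)
        (j := fun w hw => (⟨(w, x), hmemT x hx w hw⟩ : {p // p ∈ ES})) ?_ ?_ ?_ ?_ ?_
      · intro e he
        have hte := (Finset.mem_filter.mp he).2
        obtain ⟨h2x, -⟩ := htV_some e x hte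
        obtain ⟨-, hne, hβne⟩ := (memES e.1).mp e.2
        rw [h2x] at hβne hne
        exact (mem_inF x e.1.1).mpr ⟨(memEF _ _).mpr (Or.inr (hβb _ _ hβne)), hne, hβne⟩
      · intro w hw
        refine Finset.mem_filter.mpr ⟨Finset.mem_univ _, ?_⟩
        rw [htV_eq]
        exact if_pos hx
      · intro e he
        have hte := (Finset.mem_filter.mp he).2
        obtain ⟨h2x, -⟩ := htV_some e x hte
        exact Subtype.ext (Prod.ext rfl h2x.symm)
      · intro w hw
        rfl
      · intro e he
        have hte := (Finset.mem_filter.mp he).2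
        obtain ⟨h2x, -⟩ := htV_some e x hte
        rw [show ((e.1.1, x) : Z × Z) = e.1 from Prod.ext rfl h2x.symm]
    have hfibS : ∀ (F : Z × Z → ℝ) (x : Z), x ∈ S →
        ∑ e ∈ Finset.univ.filter (fun e : {p // p ∈ ES} => sV e = some x), F e.1
          = ∑ w ∈ outF x, F (x, w) := by
      intro F x hx
      refine Finset.sum_bij' (i := fun e _ => e.1.2)
        (j := fun w hw => (⟨(x, w), hmemS x hx w hw⟩ : {p // p ∈ ES})) ?_ ?_ ?_ ?_ ?_
      · intro e he
        have hte := (Finset.mem_filter.mp he).2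
        obtain ⟨h1x, -⟩ := hsV_some e x hte
        obtain ⟨-, hne, hβne⟩ := (memES e.1).mp e.2
        rw [h1x] at hβne hne
        exact (mem_outF x e.1.2).mpr ⟨(memEF _ _).mpr (Or.inl (hβb _ _ hβne)),
          (Ne.symm hne), hβne⟩
      · intro w hw
        refine Finset.mem_filter.mpr ⟨Finset.mem_univ _, ?_⟩
        rw [hsV_eq]
        exact if_pos hx
      · intro e he
        have hte := (Finset.mem_filter.mp he).2
        obtain ⟨h1x, -⟩ := hsV_some e x hte
        exact Subtype.ext (Prod.ext h1x.symm rfl)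
      · intro w hw
        rfl
      · intro e he
        have hte := (Finset.mem_filter.mp he).2
        obtain ⟨h1x, -⟩ := hsV_some e x hte
        rw [show ((x, e.1.2) : Z × Z) = e.1 from Prod.ext h1x.symm rfl]
    have hdivInt : ∀ x ∈ S,
        (∑ e ∈ Finset.univ.filter (fun e : {p // p ∈ ES} => tV e = some x), gE e)
          - ∑ e ∈ Finset.univ.filter (fun e : {p // p ∈ ES} => sV e = some x), gE e
        = ((d x : ℤ) : ℝ) := by
      intro x hx
      have e1 : ∑ e ∈ Finset.univ.filter (fun e : {p // p ∈ ES} => tV e = some x), gE e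
          = ∑ w ∈ inF x, β w x := hfibT (fun p => β p.1 p.2) x hx
      have e2 : ∑ e ∈ Finset.univ.filter (fun e : {p // p ∈ ES} => sV e = some x), gE e
          = ∑ w ∈ outF x, β x w := hfibS (fun p => β p.1 p.2) x hx
      rw [e1, e2]
      exact (hdR x).symm
    have hdivO : ∀ v : Option Z, IsIntR
        ((∑ e ∈ Finset.univ.filter (fun e : {p // p ∈ ES} => tV e = v), gE e)
          - ∑ e ∈ Finset.univ.filter (fun e : {p // p ∈ ES} => sV e = v), gE e) := by
      intro v
      match v with
      | some x =>
        by_cases hx : x ∈ S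
        · exact ⟨d x, hdivInt x hx⟩
        · have e1 : Finset.univ.filter (fun e : {p // p ∈ ES} => tV e = some x) = ∅ :=
            Finset.filter_eq_empty_iff.mpr (fun e _ heq => hx (htV_some e x heq).2)
          have e2 : Finset.univ.filter (fun e : {p // p ∈ ES} => sV e = some x) = ∅ :=
            Finset.filter_eq_empty_iff.mpr (fun e _ heq => hx (hsV_some e x heq).2)
          rw [e1, e2, Finset.sum_empty, sub_zero]
          exact ⟨0, by norm_num⟩
      | none =>
        have hmapsT : ∀ e : {p // p ∈ ES}, e ∈ Finset.univ
            → tV e ∈ insert none (S.image some) := by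
          intro e _
          rw [htV_eq e]
          by_cases hm : e.1.2 ∈ S
          · rw [if_pos hm]
            exact Finset.mem_insert_of_mem (Finset.mem_image_of_mem some hm)
          · rw [if_neg hm]
            exact Finset.mem_insert_self _ _
        have hmapsS : ∀ e : {p // p ∈ ES}, e ∈ Finset.univ
            → sV e ∈ insert none (S.image some) := by
          intro e _
          rw [hsV_eq e]
          by_cases hm : e.1.1 ∈ S
          · rw [if_pos hm]
            exact Finset.mem_insert_of_mem (Finset.mem_image_of_mem some hm)
          · rw [if_neg hm]
            exact Finset.mem_insert_self _ _
        have htotal : ∑ v ∈ insert none (S.image some),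
            ((∑ e ∈ Finset.univ.filter (fun e : {p // p ∈ ES} => tV e = v), gE e)
              - ∑ e ∈ Finset.univ.filter (fun e : {p // p ∈ ES} => sV e = v), gE e) = 0 := by
          rw [Finset.sum_sub_distrib,
            Finset.sum_fiberwise_of_maps_to hmapsT gE,
            Finset.sum_fiberwise_of_maps_to hmapsS gE, sub_self]
        have hnn : (none : Option Z) ∉ S.image some := by simp
        rw [Finset.sum_insert hnn] at htotal
        have hrest : IsIntR (∑ v ∈ S.image some,
            ((∑ e ∈ Finset.univ.filter (fun e : {p // p ∈ ES} => tV e = v), gE e)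
              - ∑ e ∈ Finset.univ.filter (fun e : {p // p ∈ ES} => sV e = v), gE e)) := by
          refine isIntR_sum _ _ fun v hv => ?_
          obtain ⟨x, hx, rfl⟩ := Finset.mem_image.mp hv
          exact ⟨d x, hdivInt x hx⟩
        obtain ⟨m, hm⟩ := hrest
        refine ⟨-m, ?_⟩
        rw [hm] at htotal
        push_cast
        linarith
    obtain ⟨hE, hh1, hh2, hh3⟩ := roundFlow sV tV hstV _ gE rfl h01E hdivO
    set A : (Z × Z) → Bool := fun p =>
      if hp : p ∈ ES then (if hE ⟨p, hp⟩ = 1 then true else false) else false with hAdef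
    have hA_ap : ∀ p, A p
        = if hp : p ∈ ES then (if hE ⟨p, hp⟩ = 1 then true else false) else false :=
      fun _ => rfl
    set hEx : Z × Z → ℝ := fun p => if hp : p ∈ ES then hE ⟨p, hp⟩ else 0 with hExdef
    have hEx_sub : ∀ e : {p // p ∈ ES}, hEx e.1 = hE e := by
      intro e
      show (if hp : e.1 ∈ ES then hE ⟨e.1, hp⟩ else 0) = hE e
      rw [dif_pos e.2]
    have hA_eq : ∀ (p : Z × Z), p ∈ ES →
        ((if A p = true then (1 : ℤ) else 0 : ℤ) : ℝ) = hEx p := by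
      intro p hp
      rw [hA_ap p, dif_pos hp]
      show ((if (if hE ⟨p, hp⟩ = 1 then true else false) = true then (1 : ℤ) else 0 : ℤ) : ℝ)
        = hEx p
      have hEp : hEx p = hE ⟨p, hp⟩ := dif_pos hp
      rcases hh1 ⟨p, hp⟩ with h0 | h1
      · rw [if_neg (by rw [h0]; norm_num : ¬(hE (⟨p, hp⟩ : {p // p ∈ ES}) = 1))]
        rw [hEp, h0]
        norm_num
      · rw [if_pos h1, hEp, h1]
        norm_num
    refine ⟨A, fun z hz => ?_⟩
    have hreal : ((dvs A z : ℤ) : ℝ) = ((d z : ℤ) : ℝ) := by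
      rw [hdvs_eq A z]
      have hin : ((∑ w ∈ inF z, (if A (w, z) = true then (1 : ℤ) else 0) : ℤ) : ℝ)
          = ∑ w ∈ inF z, hEx (w, z) := by
        push_cast
        refine Finset.sum_congr rfl fun w hw => ?_
        have := hA_eq (w, z) (hmemT z hz w hw)
        push_cast at this
        exact this
      have hout : ((∑ w ∈ outF z, (if A (z, w) = true then (1 : ℤ) else 0) : ℤ) : ℝ)
          = ∑ w ∈ outF z, hEx (z, w) := by
        push_cast
        refine Finset.sum_congr rfl fun w hw => ?_
        have := hA_eq (z, w) (hmemS z hz w hw)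
        push_cast at this
        exact this
      push_cast
      push_cast at hin hout
      rw [hin, hout, ← hfibT hEx z hz, ← hfibS hEx z hz]
      have hsub1 : ∑ e ∈ Finset.univ.filter (fun e : {p // p ∈ ES} => tV e = some z), hEx e.1
          = ∑ e ∈ Finset.univ.filter (fun e : {p // p ∈ ES} => tV e = some z), hE e :=
        Finset.sum_congr rfl fun e _ => hEx_sub e
      have hsub2 : ∑ e ∈ Finset.univ.filter (fun e : {p // p ∈ ES} => sV e = some z), hEx e.1
          = ∑ e ∈ Finset.univ.filter (fun e : {p // p ∈ ES} => sV e = some z), hE e :=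
        Finset.sum_congr rfl fun e _ => hEx_sub e
      rw [hsub1, hsub2, hh3 (some z)]
      exact hdivInt z hz
    exact_mod_cast hreal
  have hnonempty : ∃ A : (Z × Z) → Bool, ∀ z : Z, dvs A z = d z := by
    by_contra hemp
    push_neg at hemp
    have hinter : (Set.univ : Set ((Z × Z) → Bool)) ∩ ⋂ z : Z, C z = ∅ := by
      ext A
      simp only [Set.mem_inter_iff, Set.mem_univ, true_and, Set.mem_iInter,
        Set.mem_empty_iff_false, iff_false]
      intro hA
      obtain ⟨z, hz⟩ := hemp A
      exact hz (hA z)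
    obtain ⟨S, hS⟩ := IsCompact.elim_finite_subfamily_closed isCompact_univ C hCclosed hinter
    obtain ⟨A, hA⟩ := hFIP S
    have hmem : A ∈ (Set.univ : Set ((Z × Z) → Bool)) ∩ ⋂ z ∈ S, C z := by
      refine ⟨Set.mem_univ _, ?_⟩
      rw [Set.mem_iInter₂]
      intro z hz
      exact hA z hz
    rw [hS] at hmem
    exact hmem
  obtain ⟨A, hA⟩ := hnonempty
  set bI : Z → Z → ℤ := fun z w =>
    fl z w + (if (β z w ≠ 0 ∧ z ≠ w) ∧ A (z, w) = true then 1 else 0) with hbIdef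
  have hbI_eq : ∀ z w, bI z w
      = fl z w + (if (β z w ≠ 0 ∧ z ≠ w) ∧ A (z, w) = true then 1 else 0) := fun _ _ => rfl
  have hbI0 : ∀ z w, b z w = 0 → bI z w = 0 := by
    intro z w hzw
    rw [hbI_eq, hfl0 z w hzw, if_neg, add_zero]
    rintro ⟨⟨hβne, -⟩, -⟩
    exact hβne (hβ0 z w hzw)
  refine ⟨bI, ⟨⟨M + 2, ?_⟩, ⟨l, ?_⟩, ?_⟩, ?_⟩
  · intro z w
    rw [Int.norm_eq_abs]
    have h3 : |b z w| ≤ M := by rw [← Real.norm_eq_abs]; exact hM z w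
    have h4 : |((fl z w : ℤ) : ℝ)| ≤ M + 1 := by
      have h1 : ((⌊b z w⌋ : ℤ) : ℝ) ≤ b z w := Int.floor_le _
      have h2 : b z w < ((⌊b z w⌋ : ℤ) : ℝ) + 1 := Int.lt_floor_add_one _
      rw [hfl_eq z w, abs_le]
      constructor
      · linarith [neg_abs_le (b z w)]
      · linarith [le_abs_self (b z w)]
    by_cases hcond : (β z w ≠ 0 ∧ z ≠ w) ∧ A (z, w) = true
    · rw [hbI_eq z w, if_pos hcond]
      push_cast
      calc |((fl z w : ℤ) : ℝ) + 1| ≤ |((fl z w : ℤ) : ℝ)| + |(1 : ℝ)| := abs_add_le _ _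
        _ ≤ M + 2 := by rw [abs_one]; linarith
    · rw [hbI_eq z w, if_neg hcond, add_zero]
      linarith [h4]
  · intro z w hzw
    refine hl z w ?_
    intro hc
    exact hzw (hbI0 z w hc)
  · intro z
    refine (hloc z).subset ?_
    intro w hw
    rcases hw with hw | hw
    · exact Or.inl (fun hc => hw (hbI0 z w hc))
    · exact Or.inr (fun hc => hw (hbI0 w z hc))
  · intro z
    rw [ufBoundaryAt_eq_sum bI z (EF z)
      (fun w hw => (memEF z w).mpr (Or.inr (fun hc => hw (hbI0 w z hc))))
      (fun w hw => (memEF z w).mpr (Or.inl (fun hc => hw (hbI0 z w hc))))]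
    have hsplit1 : ∑ w ∈ EF z, bI w z
        = (∑ w ∈ EF z, fl w z)
          + ∑ w ∈ EF z, (if (β w z ≠ 0 ∧ w ≠ z) ∧ A (w, z) = true then (1 : ℤ) else 0) := by
      rw [← Finset.sum_add_distrib]
    have hsplit2 : ∑ w ∈ EF z, bI z w
        = (∑ w ∈ EF z, fl z w)
          + ∑ w ∈ EF z, (if (β z w ≠ 0 ∧ z ≠ w) ∧ A (z, w) = true then (1 : ℤ) else 0) := by
      rw [← Finset.sum_add_distrib]
    have hsubIn : inF z ⊆ EF z := fun w hw => ((mem_inF z w).mp hw).1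
    have hsubOut : outF z ⊆ EF z := fun w hw => ((mem_outF z w).mp hw).1
    have hin : ∑ w ∈ EF z, (if (β w z ≠ 0 ∧ w ≠ z) ∧ A (w, z) = true then (1 : ℤ) else 0)
        = ∑ w ∈ inF z, (if A (w, z) = true then (1 : ℤ) else 0) := by
      have hcg : ∑ w ∈ inF z, (if A (w, z) = true then (1 : ℤ) else 0)
          = ∑ w ∈ inF z, (if (β w z ≠ 0 ∧ w ≠ z) ∧ A (w, z) = true then (1 : ℤ) else 0) := by
        refine Finset.sum_congr rfl fun w hw => ?_
        obtain ⟨-, hne, hβne⟩ := (mem_inF z w).mp hw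
        by_cases hA' : A (w, z) = true
        · rw [if_pos hA', if_pos ⟨⟨hβne, hne⟩, hA'⟩]
        · rw [if_neg hA', if_neg (fun hc => hA' hc.2)]
      rw [hcg]
      refine (Finset.sum_subset hsubIn ?_).symm
      intro w hw hnw
      refine if_neg (fun hc => hnw ((mem_inF z w).mpr ⟨hw, hc.1.2, hc.1.1⟩))
    have hout : ∑ w ∈ EF z, (if (β z w ≠ 0 ∧ z ≠ w) ∧ A (z, w) = true then (1 : ℤ) else 0)
        = ∑ w ∈ outF z, (if A (z, w) = true then (1 : ℤ) else 0) := by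
      have hcg : ∑ w ∈ outF z, (if A (z, w) = true then (1 : ℤ) else 0)
          = ∑ w ∈ outF z, (if (β z w ≠ 0 ∧ z ≠ w) ∧ A (z, w) = true then (1 : ℤ) else 0) := by
        refine Finset.sum_congr rfl fun w hw => ?_
        obtain ⟨-, hne, hβne⟩ := (mem_outF z w).mp hw
        by_cases hA' : A (z, w) = true
        · rw [if_pos hA', if_pos ⟨⟨hβne, Ne.symm hne⟩, hA'⟩]
        · rw [if_neg hA', if_neg (fun hc => hA' hc.2)]
      rw [hcg]
      refine (Finset.sum_subset hsubOut ?_).symm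
      intro w hw hnw
      refine if_neg (fun hc => hnw ((mem_outF z w).mpr ⟨hw, Ne.symm hc.1.2, hc.1.1⟩))
    have hAz := hA z
    rw [hdvs_eq A z] at hAz
    rw [hd_eq z] at hAz
    rw [hsplit1, hsplit2, hin, hout]
    linarith [hAz]


end Stmt13

/-- For an infinite, coarsely connected, uniformly discrete space of bounded
geometry, `H₀^{uf}(Z; ℤ) → H₀^{uf}(Z; ℝ)` is an isomorphism: injective (an integer
cycle bounding over `ℝ` bounds over `ℤ`) and surjective (every bounded real
0-chain differs from an integer one by a real boundary). -/
theorem stmt13 {Z : Type*} [MetricSpace Z] (hinf : Infinite Z)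
    (hcc : CoarselyConnected Z)
    (hud : UniformlyDiscrete Z) (hbg : BoundedGeometry Z) :
    (∀ c : Z → ℤ, (∃ K : ℤ, ∀ z, |c z| ≤ K) →
      UFBoundsZero (fun z => (c z : ℝ)) → UFBoundsZero c) ∧
    (∀ c : Z → ℝ, (∃ K : ℝ, ∀ z, |c z| ≤ K) →
      ∃ c' : Z → ℤ, (∃ K : ℤ, ∀ z, |c' z| ≤ K) ∧
        UFBoundsZero (fun z => c z - (c' z : ℝ))) := by
  constructor
  · intro c _hK h
    exact Stmt13.injMain c h
  · intro c hbd
    exact Stmt13.surjMain hinf hcc hbg c hbd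
end

section
/- A uniformly discrete space X of bounded geometry is non-amenable if and only if the fundamental class [X] (the 0-chain assigning 1 to every point) vanishes in H₀^{uf}(X; ℤ). -/
/-- Amenability: existence of a regular (Følner) sequence of finite nonempty sets
whose relative `r`-boundaries tend to `0` for every `r > 0`. -/
def Amenable (Z : Type*) [MetricSpace Z] : Prop :=
  ∃ S : ℕ → Set Z, (∀ i, (S i).Finite ∧ (S i).Nonempty) ∧
    ∀ r > (0 : ℝ), Filter.Tendsto
      (fun i => ((bdry r (S i)).ncard : ℝ) / ((S i).ncard : ℝ))
      Filter.atTop (nhds 0)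



section Helpers

set_option linter.unusedSectionVars false

open Set Filter

variable {X : Type*} [MetricSpace X]



variable {X : Type*} [MetricSpace X]

lemma subset_nbhd {r : ℝ} (hr : 0 ≤ r) (A : Set X) : A ⊆ nbhd r A :=
  fun a ha => ⟨a, ha, by simpa using hr⟩

lemma nbhd_mono_radius {r s : ℝ} (h : r ≤ s) (A : Set X) : nbhd r A ⊆ nbhd s A :=
  fun _ ⟨a, ha, hd⟩ => ⟨a, ha, hd.trans h⟩

lemma nbhd_nbhd {r s : ℝ} (A : Set X) : nbhd r (nbhd s A) ⊆ nbhd (s + r) A := by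
  rintro z ⟨y, ⟨a, ha, hya⟩, hzy⟩
  exact ⟨a, ha, by have := dist_triangle z y a; linarith⟩

lemma finite_nbhd (hbg : BoundedGeometry X) {A : Set X} (hA : A.Finite) (r : ℝ) :
    (nbhd r A).Finite := by
  obtain ⟨N, hN⟩ := hbg r
  have hsub : nbhd r A ⊆ ⋃ a ∈ A, {z | dist z a ≤ r} := by
    rintro z ⟨a, ha, h⟩
    exact mem_biUnion ha h
  exact (hA.biUnion fun a _ => (hN a).1).subset hsub

lemma finite_bdry (hbg : BoundedGeometry X) {A : Set X} (hA : A.Finite) (r : ℝ) :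
    (bdry r A).Finite :=
  (finite_nbhd hbg hA r).subset diff_subset

lemma nbhd_eq_union {r : ℝ} (hr : 0 ≤ r) (A : Set X) : nbhd r A = A ∪ bdry r A := by
  rw [bdry, union_diff_self, union_eq_self_of_subset_left (subset_nbhd hr A)]

lemma ncard_nbhd (hbg : BoundedGeometry X) {A : Set X} (hA : A.Finite) {r : ℝ} (hr : 0 ≤ r) :
    (nbhd r A).ncard = A.ncard + (bdry r A).ncard := by
  rw [nbhd_eq_union hr]
  exact ncard_union_eq (by rw [bdry]; exact disjoint_sdiff_right) hA (finite_bdry hbg hA r)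



lemma iso_of_not_amenable (hbg : BoundedGeometry X) (h : ¬ Amenable X) :
    ∃ C : ℝ, 0 < C ∧ ∃ r : ℝ, 0 < r ∧
      ∀ S : Set X, S.Finite → (S.ncard : ℝ) ≤ C * ((bdry r S).ncard : ℝ) := by
  by_contra hc
  push_neg at hc
  apply h
  have key : ∀ i : ℕ, ∃ S : Set X, S.Finite ∧
      ((i : ℝ) + 1) * ((bdry ((i : ℝ) + 1) S).ncard : ℝ) < (S.ncard : ℝ) := by
    intro i
    obtain ⟨S, hS, hlt⟩ := hc ((i : ℝ) + 1) (by positivity) ((i : ℝ) + 1) (by positivity)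
    exact ⟨S, hS, hlt⟩
  choose S hSfin hSlt using key
  have hpos : ∀ i, 0 < ((S i).ncard : ℝ) := by
    intro i
    have := hSlt i
    have h0 : (0:ℝ) ≤ ((i : ℝ) + 1) * ((bdry ((i : ℝ) + 1) (S i)).ncard : ℝ) := by positivity
    linarith
  refine ⟨S, fun i => ⟨hSfin i, ?_⟩, ?_⟩
  · have := hpos i
    have hne : (S i).ncard ≠ 0 := by
      intro h0; rw [h0] at this; simp at this
    exact Set.nonempty_of_ncard_ne_zero hne
  · intro r hr
    have h0 : Filter.Tendsto (fun _ : ℕ => (0:ℝ)) Filter.atTop (nhds 0) := tendsto_const_nhds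
    have h1 : Filter.Tendsto (fun i : ℕ => 1 / ((i : ℝ) + 1)) Filter.atTop (nhds 0) :=
      tendsto_one_div_add_atTop_nhds_zero_nat
    refine tendsto_of_tendsto_of_tendsto_of_le_of_le' h0 h1 ?_ ?_
    · exact Filter.Eventually.of_forall fun i => by positivity
    · filter_upwards [Filter.eventually_ge_atTop (Nat.ceil r)] with i hi
      have hri : r ≤ (i : ℝ) + 1 := by
        calc r ≤ (Nat.ceil r : ℝ) := Nat.le_ceil r
        _ ≤ (i : ℝ) := by exact_mod_cast hi
        _ ≤ (i : ℝ) + 1 := by linarith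
      have hsub : bdry r (S i) ⊆ bdry ((i : ℝ) + 1) (S i) :=
        Set.diff_subset_diff_left (nbhd_mono_radius hri _)
      have hcard : ((bdry r (S i)).ncard : ℝ) ≤ ((bdry ((i:ℝ)+1) (S i)).ncard : ℝ) := by
        exact_mod_cast Set.ncard_le_ncard hsub (finite_bdry hbg (hSfin i) _)
      have hlt := hSlt i
      rw [div_le_div_iff₀ (hpos i) (by positivity)]
      have hip : (0:ℝ) < (i : ℝ) + 1 := by positivity
      calc ((bdry r (S i)).ncard : ℝ) * ((i:ℝ)+1) ≤ ((bdry ((i:ℝ)+1) (S i)).ncard : ℝ) * ((i:ℝ)+1) := by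
            nlinarith
        _ ≤ (S i).ncard * 1 := by nlinarith
        _ = 1 * ((S i).ncard : ℝ) := by ring

lemma growth_of_iso (hbg : BoundedGeometry X) {C r : ℝ} (hC : 0 < C) (hr : 0 < r)
    (hiso : ∀ S : Set X, S.Finite → (S.ncard : ℝ) ≤ C * ((bdry r S).ncard : ℝ)) :
    ∀ k : ℕ, ∀ S : Set X, S.Finite →
      (1 + 1/C)^k * (S.ncard : ℝ) ≤ ((nbhd ((k : ℝ) * r) S).ncard : ℝ) := by
  intro k
  induction k with
  | zero =>
    intro S hS
    simp only [pow_zero, one_mul, Nat.cast_zero, zero_mul]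
    exact_mod_cast Set.ncard_le_ncard (subset_nbhd le_rfl S) (finite_nbhd hbg hS 0)
  | succ k ih =>
    intro S hS
    have hT : (nbhd ((k:ℝ) * r) S).Finite := finite_nbhd hbg hS _
    have h1 : ((nbhd r (nbhd ((k:ℝ)*r) S)).ncard : ℝ) ≤ ((nbhd (((k:ℕ)+1 : ℝ) * r) S).ncard : ℝ) := by
      have hsub : nbhd r (nbhd ((k:ℝ)*r) S) ⊆ nbhd (((k:ℕ)+1:ℝ) * r) S := by
        have h := nbhd_nbhd (r := r) (s := (k : ℝ)*r) (A := S)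
        have he : (k:ℝ)*r + r = ((k:ℕ)+1:ℝ) * r := by push_cast; ring
        rw [he] at h
        exact h
      exact_mod_cast Set.ncard_le_ncard hsub (finite_nbhd hbg hS _)
    have h2 : (1 + 1/C) * ((nbhd ((k:ℝ)*r) S).ncard : ℝ) ≤
        ((nbhd r (nbhd ((k:ℝ)*r) S)).ncard : ℝ) := by
      rw [ncard_nbhd hbg hT hr.le]
      have hb : ((nbhd ((k:ℝ)*r) S).ncard : ℝ) / C ≤ ((bdry r (nbhd ((k:ℝ)*r) S)).ncard : ℝ) := by
        rw [div_le_iff₀ hC]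
        linarith [hiso _ hT]
      have he : (1 + 1/C) * ((nbhd ((k:ℝ)*r) S).ncard : ℝ) =
          ((nbhd ((k:ℝ)*r) S).ncard : ℝ) + ((nbhd ((k:ℝ)*r) S).ncard : ℝ) / C := by ring
      push_cast
      rw [he]
      linarith
    have hpos : (0:ℝ) < 1 + 1/C := by positivity
    have hstep : (1 + 1/C)^(k+1) * (S.ncard : ℝ) ≤ (1 + 1/C) * ((nbhd ((k:ℝ)*r) S).ncard : ℝ) := by
      have := mul_le_mul_of_nonneg_left (ih S hS) hpos.le
      calc (1 + 1/C)^(k+1) * (S.ncard : ℝ) = (1 + 1/C) * ((1 + 1/C)^k * (S.ncard : ℝ)) := by ring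
        _ ≤ (1 + 1/C) * ((nbhd ((k:ℝ)*r) S).ncard : ℝ) := this
    have : ((k+1 : ℕ) : ℝ) = ((k:ℕ)+1:ℝ) := by push_cast; ring
    rw [this]
    linarith

lemma exists_injection (hbg : BoundedGeometry X) {C r : ℝ} (hC : 0 < C) (hr : 0 < r)
    (hiso : ∀ S : Set X, S.Finite → (S.ncard : ℝ) ≤ C * ((bdry r S).ncard : ℝ)) :
    ∃ R : ℝ, ∃ j : X × Fin 2 → X, Function.Injective j ∧ ∀ p, dist (j p) p.1 ≤ R := by
  classical
  have h1C : (1:ℝ) < 1 + 1/C := by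
    have : (0:ℝ) < 1/C := by positivity
    linarith
  obtain ⟨k, hk⟩ := pow_unbounded_of_one_lt (2:ℝ) h1C
  set R := (k : ℝ) * r with hR
  obtain ⟨N, hN⟩ := hbg R
  set B : X → Finset X := fun x => (hN x).1.toFinset with hB
  have hBmem : ∀ x y : X, y ∈ B x ↔ dist y x ≤ R := by
    intro x y; simp [hB]
  have hall : ∀ A : Finset (X × Fin 2), A.card ≤ (A.biUnion fun p => B p.1).card := by
    intro A
    set F := A.image Prod.fst with hF
    have h1 : A.card ≤ 2 * F.card := by
      have hsub : A ⊆ F ×ˢ (Finset.univ : Finset (Fin 2)) := by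
        intro p hp
        rw [Finset.mem_product]
        exact ⟨Finset.mem_image_of_mem _ hp, Finset.mem_univ _⟩
      calc A.card ≤ (F ×ˢ (Finset.univ : Finset (Fin 2))).card := Finset.card_le_card hsub
        _ = F.card * 2 := by rw [Finset.card_product]; simp
        _ = 2 * F.card := by ring
    have h2 : (2 * F.card : ℝ) ≤ ((nbhd R (↑F : Set X)).ncard : ℝ) := by
      have hg := growth_of_iso hbg hC hr hiso k (↑F) F.finite_toSet
      rw [Set.ncard_coe_finset] at hg
      have hcn : (0:ℝ) ≤ (F.card : ℝ) := by positivity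
      nlinarith
    have h3 : nbhd R (↑F : Set X) ⊆ ↑(A.biUnion fun p => B p.1) := by
      rintro z ⟨a, ha, hd⟩
      obtain ⟨p, hp, hpa⟩ := Finset.mem_image.mp ha
      refine Finset.mem_coe.mpr (Finset.mem_biUnion.mpr ⟨p, hp, ?_⟩)
      rw [hBmem, hpa]
      exact hd
    have h4 : ((nbhd R (↑F:Set X)).ncard : ℝ) ≤ ((A.biUnion fun p => B p.1).card : ℝ) := by
      have := Set.ncard_le_ncard h3 (Finset.finite_toSet _)
      rw [Set.ncard_coe_finset] at this
      exact_mod_cast this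
    have : (A.card : ℝ) ≤ ((A.biUnion fun p => B p.1).card : ℝ) := by
      calc (A.card : ℝ) ≤ (2 * F.card : ℝ) := by exact_mod_cast h1
        _ ≤ _ := h2
        _ ≤ _ := h4
    exact_mod_cast this
  obtain ⟨j, hjinj, hjmem⟩ :=
    (Finset.all_card_le_biUnion_card_iff_exists_injective (fun p : X × Fin 2 => B p.1)).mp hall
  exact ⟨R, j, hjinj, fun p => (hBmem _ _).mp (hjmem p)⟩

/-- Forward orbit of points outside the range of `j` under the `0`-child map. -/
def ray {X : Type*} (j : X × Fin 2 → X) : Set X :=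
  {x | ∃ (k : ℕ) (root : X), root ∉ Set.range j ∧ (fun y => j (y,0))^[k] root = x}

open scoped Classical in
/-- The uniformly finite 1-chain whose boundary is the constant 1. -/
noncomputable def chainB {X : Type*} (j : X × Fin 2 → X) : X → X → ℤ := fun z w =>
  (if j (w,0) = z then 1 else 0) + (if j (w,1) = z then 1 else 0) +
    (if z ∈ ray j ∧ w = j (z,0) then 1 else 0)

lemma root_mem_ray {j : X × Fin 2 → X} {x : X} (hx : x ∉ Set.range j) : x ∈ ray j :=
  ⟨0, x, hx, rfl⟩

lemma ray_step {j : X × Fin 2 → X} {x : X} (hx : x ∈ ray j) : j (x, 0) ∈ ray j := by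
  obtain ⟨k, root, hroot, hk⟩ := hx
  exact ⟨k+1, root, hroot, by rw [Function.iterate_succ_apply', hk]⟩

lemma ray_back {j : X × Fin 2 → X} {z : X} (hz : z ∈ ray j) (hr : z ∈ Set.range j) :
    ∃ w ∈ ray j, z = j (w, 0) := by
  obtain ⟨k, root, hroot, hk⟩ := hz
  cases k with
  | zero => exact absurd hr (by rw [← hk]; exact hroot)
  | succ k =>
    rw [Function.iterate_succ_apply'] at hk
    exact ⟨(fun y => j (y,0))^[k] root, ⟨k, root, hroot, rfl⟩, hk.symm⟩

lemma finsum_ite_of_exists {p : X → Prop} [DecidablePred p]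
    (hs : ∀ w w', p w → p w' → w = w') (h : ∃ w, p w) :
    ∑ᶠ w, (if p w then (1:ℤ) else 0) = 1 := by
  obtain ⟨w0, hw0⟩ := h
  rw [finsum_eq_single _ w0 fun w hw => if_neg fun hp => hw (hs w w0 hp hw0), if_pos hw0]

lemma finsum_ite_of_not_exists {p : X → Prop} [DecidablePred p] (h : ¬ ∃ w, p w) :
    ∑ᶠ w, (if p w then (1:ℤ) else 0) = 0 :=
  finsum_eq_zero_of_forall_eq_zero fun w => if_neg fun hp => h ⟨w, hp⟩

lemma finsum_ite_support_finite {p : X → Prop} [DecidablePred p]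
    (hs : ∀ w w', p w → p w' → w = w') :
    (Function.support fun w => if p w then (1:ℤ) else 0).Finite := by
  apply Set.Subsingleton.finite
  intro w hw w' hw'
  simp only [Function.mem_support, ne_eq, ite_eq_right_iff, not_forall] at hw hw'
  exact hs w w' hw.1 hw'.1

open scoped Classical in
lemma chainB_boundary {j : X × Fin 2 → X} (hj : Function.Injective j) (z : X) :
    ufBoundaryAt (chainB j) z = 1 := by
  have hu0 : ∀ w w' : X, j (w,0) = z → j (w',0) = z → w = w' := by
    intro w w' h h'
    have := hj (h.trans h'.symm)
    simpa using this
  have hu1 : ∀ w w' : X, j (w,1) = z → j (w',1) = z → w = w' := by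
    intro w w' h h'
    have := hj (h.trans h'.symm)
    simpa using this
  -- inflow
  have hfin1 : (Function.support fun w => if j (z,0) = w then (1:ℤ) else 0).Finite :=
    finsum_ite_support_finite fun w w' hw hw' => hw.symm.trans hw'
  have hfin2 : (Function.support fun w => if j (z,1) = w then (1:ℤ) else 0).Finite :=
    finsum_ite_support_finite fun w w' hw hw' => hw.symm.trans hw'
  have hfin3 : (Function.support fun w => if w ∈ ray j ∧ z = j (w,0) then (1:ℤ) else 0).Finite := by
    apply finsum_ite_support_finite
    intro w w' hw hw'
    have := hj (hw.2.symm.trans hw'.2)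
    simpa using this
  have hin : (∑ᶠ w, chainB j w z) =
      2 + (if ∃ w, w ∈ ray j ∧ z = j (w,0) then (1:ℤ) else 0) := by
    have he : ∀ w : X, chainB j w z =
        (if j (z,0) = w then (1:ℤ) else 0) + (if j (z,1) = w then 1 else 0) +
          (if w ∈ ray j ∧ z = j (w,0) then 1 else 0) := by
      intro w
      simp only [chainB]
    rw [finsum_congr he]
    rw [finsum_add_distrib ((hfin1.union hfin2).subset (Function.support_add _ _)) hfin3,
      finsum_add_distrib hfin1 hfin2]
    have e1 : ∑ᶠ w, (if j (z,0) = w then (1:ℤ) else 0) = 1 :=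
      finsum_ite_of_exists (fun w w' hw hw' => hw.symm.trans hw') ⟨j (z,0), rfl⟩
    have e2 : ∑ᶠ w, (if j (z,1) = w then (1:ℤ) else 0) = 1 :=
      finsum_ite_of_exists (fun w w' hw hw' => hw.symm.trans hw') ⟨j (z,1), rfl⟩
    have e3 : ∑ᶠ w, (if w ∈ ray j ∧ z = j (w,0) then (1:ℤ) else 0) =
        if ∃ w, w ∈ ray j ∧ z = j (w,0) then 1 else 0 := by
      by_cases h : ∃ w, w ∈ ray j ∧ z = j (w,0)
      · rw [if_pos h]
        apply finsum_ite_of_exists _ h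
        intro w w' hw hw'
        have := hj (hw.2.symm.trans hw'.2)
        simpa using this
      · rw [if_neg h]
        exact finsum_ite_of_not_exists h
    rw [e1, e2, e3]
    ring
  -- outflow
  have hfo1 : (Function.support fun w => if j (w,0) = z then (1:ℤ) else 0).Finite :=
    finsum_ite_support_finite hu0
  have hfo2 : (Function.support fun w => if j (w,1) = z then (1:ℤ) else 0).Finite :=
    finsum_ite_support_finite hu1
  have hfo3 : (Function.support fun w => if z ∈ ray j ∧ w = j (z,0) then (1:ℤ) else 0).Finite :=
    finsum_ite_support_finite fun w w' hw hw' => hw.2.trans hw'.2.symm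
  have hout : (∑ᶠ w, chainB j z w) =
      (if ∃ w : X, j (w,0) = z then (1:ℤ) else 0) + (if ∃ w : X, j (w,1) = z then 1 else 0) +
        (if z ∈ ray j then 1 else 0) := by
    have he : ∀ w : X, chainB j z w =
        (if j (w,0) = z then (1:ℤ) else 0) + (if j (w,1) = z then 1 else 0) +
          (if z ∈ ray j ∧ w = j (z,0) then 1 else 0) := fun w => rfl
    rw [finsum_congr he]
    rw [finsum_add_distrib ((hfo1.union hfo2).subset (Function.support_add _ _)) hfo3,
      finsum_add_distrib hfo1 hfo2]
    have e1 : ∑ᶠ w, (if j (w,0) = z then (1:ℤ) else 0) = if ∃ w : X, j (w,0) = z then 1 else 0 := by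
      by_cases h : ∃ w : X, j (w,0) = z
      · rw [if_pos h]; exact finsum_ite_of_exists hu0 h
      · rw [if_neg h]; exact finsum_ite_of_not_exists h
    have e2 : ∑ᶠ w, (if j (w,1) = z then (1:ℤ) else 0) = if ∃ w : X, j (w,1) = z then 1 else 0 := by
      by_cases h : ∃ w : X, j (w,1) = z
      · rw [if_pos h]; exact finsum_ite_of_exists hu1 h
      · rw [if_neg h]; exact finsum_ite_of_not_exists h
    have e3 : ∑ᶠ w, (if z ∈ ray j ∧ w = j (z,0) then (1:ℤ) else 0) =
        if z ∈ ray j then 1 else 0 := by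
      by_cases h : z ∈ ray j
      · rw [if_pos h]
        exact finsum_ite_of_exists (fun w w' hw hw' => hw.2.trans hw'.2.symm) ⟨j (z,0), h, rfl⟩
      · rw [if_neg h]
        exact finsum_ite_of_not_exists fun ⟨w, hw⟩ => h hw.1
    rw [e1, e2, e3]
  rw [ufBoundaryAt, hin, hout]
  -- case analysis
  by_cases hB0 : ∃ w : X, j (w,0) = z
  · by_cases hB1 : ∃ w : X, j (w,1) = z
    · exfalso
      obtain ⟨w, hw⟩ := hB0
      obtain ⟨w', hw'⟩ := hB1
      have := hj (hw.trans hw'.symm)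
      simp [Prod.ext_iff] at this
    · by_cases hC : z ∈ ray j
      · have hA : ∃ w, w ∈ ray j ∧ z = j (w,0) := by
          obtain ⟨w, hw, he⟩ := ray_back hC ⟨(hB0.choose, 0), hB0.choose_spec⟩
          exact ⟨w, hw, he⟩
        rw [if_pos hA, if_pos hB0, if_neg hB1, if_pos hC]
        ring
      · have hA : ¬ ∃ w, w ∈ ray j ∧ z = j (w,0) := by
          rintro ⟨w, hw, he⟩
          exact hC (he ▸ ray_step hw)
        rw [if_neg hA, if_pos hB0, if_neg hB1, if_neg hC]
        ring
  · by_cases hB1 : ∃ w : X, j (w,1) = z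
    · by_cases hC : z ∈ ray j
      · exfalso
        obtain ⟨w, hw, he⟩ := ray_back hC ⟨(hB1.choose, 1), hB1.choose_spec⟩
        exact hB0 ⟨w, he.symm⟩
      · have hA : ¬ ∃ w, w ∈ ray j ∧ z = j (w,0) := fun ⟨w, _, he⟩ => hB0 ⟨w, he.symm⟩
        rw [if_neg hA, if_neg hB0, if_pos hB1, if_neg hC]
        ring
    · have hroot : z ∉ Set.range j := by
        rintro ⟨⟨x, i⟩, hx⟩
        fin_cases i
        · exact hB0 ⟨x, hx⟩
        · exact hB1 ⟨x, hx⟩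
      have hC : z ∈ ray j := root_mem_ray hroot
      have hA : ¬ ∃ w, w ∈ ray j ∧ z = j (w,0) := fun ⟨w, _, he⟩ => hB0 ⟨w, he.symm⟩
      rw [if_neg hA, if_neg hB0, if_neg hB1, if_pos hC]
      ring

lemma chainB_length {j : X × Fin 2 → X} {R : ℝ} (hd : ∀ p, dist (j p) p.1 ≤ R)
    {z w : X} (h : chainB j z w ≠ 0) : dist z w ≤ R := by
  classical
  by_contra hdist
  apply h
  have c1 : ¬ j (w,0) = z := fun he => hdist (he ▸ hd (w,0))
  have c2 : ¬ j (w,1) = z := fun he => hdist (he ▸ hd (w,1))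
  have c3 : ¬ (z ∈ ray j ∧ w = j (z,0)) := by
    rintro ⟨_, he⟩
    exact hdist (dist_comm z w ▸ he ▸ hd (z,0))
  simp [chainB, c1, c2, c3]

lemma chainB_uf (hbg : BoundedGeometry X) {j : X × Fin 2 → X} {R : ℝ}
    (hd : ∀ p, dist (j p) p.1 ≤ R) : IsUFOneChain (chainB j) := by
  classical
  refine ⟨⟨3, ?_⟩, ⟨R, fun z w h => chainB_length hd h⟩, ?_⟩
  · intro z w
    simp only [chainB]
    split_ifs <;> norm_num [Int.norm_eq_abs]
  · intro z
    obtain ⟨N, hN⟩ := hbg R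
    apply (hN z).1.subset
    intro w hw
    rcases hw with h | h
    · have := chainB_length hd h
      simpa [dist_comm] using this
    · exact chainB_length hd h

lemma ufbz_of_iso (hbg : BoundedGeometry X) {C r : ℝ} (hC : 0 < C) (hr : 0 < r)
    (hiso : ∀ S : Set X, S.Finite → (S.ncard : ℝ) ≤ C * ((bdry r S).ncard : ℝ)) :
    UFBoundsZero (fun _ : X => (1:ℤ)) := by
  obtain ⟨R, j, hj, hd⟩ := exists_injection hbg hC hr hiso
  exact ⟨chainB j, chainB_uf hbg hd, fun z => (chainB_boundary hj z).symm⟩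

lemma not_amenable_of_ufbz (hbg : BoundedGeometry X)
    (h : UFBoundsZero (fun _ : X => (1:ℤ))) : ¬ Amenable X := by
  classical
  rintro ⟨S, hS, hFol⟩
  obtain ⟨b, ⟨⟨M, hM⟩, ⟨l, hl⟩, hloc⟩, hone⟩ := h
  set l' : ℝ := max l 1 with hl'
  have hl'pos : (0:ℝ) < l' := lt_of_lt_of_le one_pos (le_max_right _ _)
  obtain ⟨N, hN⟩ := hbg l'
  -- key counting estimate
  have key : ∀ F : Finset X, (F.card : ℝ) ≤ (N * (2*M)) * ((bdry l' (↑F : Set X)).ncard : ℝ) := by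
    intro F
    rcases isEmpty_or_nonempty X with hXe | hXne
    · have h1 : F = ∅ := Finset.eq_empty_of_isEmpty F
      have h2 : bdry l' (∅ : Set X) = ∅ := Set.eq_empty_of_isEmpty _
      simp [h1, h2]
    set T : Finset X := F ∪ F.biUnion (fun z => (hloc z).toFinset) with hT
    have hFT : F ⊆ T := Finset.subset_union_left
    have hmemT : ∀ z ∈ F, ∀ w : X, (b z w ≠ 0 ∨ b w z ≠ 0) → w ∈ T := fun z hz w hw =>
      Finset.mem_union_right _ (Finset.mem_biUnion.mpr ⟨z, hz, (hloc z).mem_toFinset.mpr hw⟩)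
    have hsum : (F.card : ℤ) = ∑ w ∈ T \ F, ∑ z ∈ F, (b w z - b z w) := by
      have h1 : ∀ z ∈ F, ufBoundaryAt b z = (∑ w ∈ T, b w z) - ∑ w ∈ T, b z w := by
        intro z hz
        rw [ufBoundaryAt]
        congr 1
        · exact finsum_eq_finset_sum_of_support_subset _
            (fun w hw => hmemT z hz w (Or.inr (Function.mem_support.mp hw)))
        · exact finsum_eq_finset_sum_of_support_subset _
            (fun w hw => hmemT z hz w (Or.inl (Function.mem_support.mp hw)))
      have hcomm : ∑ z ∈ F, ∑ w ∈ F, b w z = ∑ z ∈ F, ∑ w ∈ F, b z w := Finset.sum_comm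
      calc (F.card : ℤ) = ∑ _z ∈ F, (1:ℤ) := by simp
        _ = ∑ z ∈ F, ufBoundaryAt b z := Finset.sum_congr rfl fun z _ => hone z
        _ = (∑ z ∈ F, ∑ w ∈ T, b w z) - ∑ z ∈ F, ∑ w ∈ T, b z w := by
            rw [← Finset.sum_sub_distrib]
            exact Finset.sum_congr rfl h1
        _ = ((∑ z ∈ F, (∑ w ∈ T \ F, b w z + ∑ w ∈ F, b w z)) -
              ∑ z ∈ F, (∑ w ∈ T \ F, b z w + ∑ w ∈ F, b z w)) := by
            congr 1 <;> exact Finset.sum_congr rfl fun z _ => (Finset.sum_sdiff hFT).symm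
        _ = ∑ z ∈ F, ∑ w ∈ T \ F, (b w z - b z w) := by
            rw [Finset.sum_add_distrib, Finset.sum_add_distrib, hcomm]
            have hd : ∑ z ∈ F, ∑ w ∈ T \ F, (b w z - b z w)
                = (∑ z ∈ F, ∑ w ∈ T \ F, b w z) - ∑ z ∈ F, ∑ w ∈ T \ F, b z w := by
              rw [← Finset.sum_sub_distrib]
              exact Finset.sum_congr rfl fun z _ => Finset.sum_sub_distrib _ _
            rw [hd]
            ring
        _ = ∑ w ∈ T \ F, ∑ z ∈ F, (b w z - b z w) := Finset.sum_comm
    have habs : (F.card : ℝ) ≤ ∑ w ∈ T \ F, ∑ z ∈ F, ‖b w z - b z w‖ := by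
      calc (F.card : ℝ) = (((F.card : ℤ) : ℝ)) := by push_cast; ring
        _ = ((∑ w ∈ T \ F, ∑ z ∈ F, (b w z - b z w) : ℤ) : ℝ) := by rw [← hsum]
        _ ≤ ∑ w ∈ T \ F, ∑ z ∈ F, ‖b w z - b z w‖ := by
            push_cast
            refine Finset.sum_le_sum fun w _ => Finset.sum_le_sum fun z _ => ?_
            rw [Int.norm_eq_abs]
            push_cast
            exact le_abs_self _
    have hM0 : (0:ℝ) ≤ 2*M := by
      obtain ⟨x⟩ := hXne
      have := (norm_nonneg (b x x)).trans (hM x x)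
      linarith
    have hinner : ∀ w : X, ∑ z ∈ F, ‖b w z - b z w‖ ≤ N * (2*M) := by
      intro w
      set G := F.filter (fun z => dist z w ≤ l') with hG
      have hfe : ∑ z ∈ G, ‖b w z - b z w‖ = ∑ z ∈ F, ‖b w z - b z w‖ := by
        apply Finset.sum_filter_of_ne
        intro z _ hz
        by_contra hdist
        apply hz
        have hb1 : b w z = 0 := by
          by_contra hb
          exact hdist (by
            have := hl w z hb
            rw [dist_comm]
            exact this.trans (le_max_left l 1))
        have hb2 : b z w = 0 := by
          by_contra hb
          exact hdist ((hl z w hb).trans (le_max_left l 1))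
        rw [hb1, hb2]
        simp
      have hGcard : (G.card : ℝ) ≤ N := by
        have hsub : (↑G : Set X) ⊆ {y | dist y w ≤ l'} := fun z hz =>
          (Finset.mem_filter.mp hz).2
        have : G.card ≤ N := by
          calc G.card = (↑G : Set X).ncard := (Set.ncard_coe_finset _).symm
            _ ≤ {y | dist y w ≤ l'}.ncard := Set.ncard_le_ncard hsub (hN w).1
            _ ≤ N := (hN w).2
        exact_mod_cast this
      calc ∑ z ∈ F, ‖b w z - b z w‖ = ∑ z ∈ G, ‖b w z - b z w‖ := hfe.symm
        _ ≤ ∑ _z ∈ G, (2*M) := Finset.sum_le_sum fun z _ => by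
            calc ‖b w z - b z w‖ ≤ ‖b w z‖ + ‖b z w‖ := norm_sub_le _ _
              _ ≤ 2*M := by linarith [hM w z, hM z w]
        _ = G.card * (2*M) := by rw [Finset.sum_const, nsmul_eq_mul]
        _ ≤ N * (2*M) := mul_le_mul_of_nonneg_right hGcard hM0
    have hTF : ((T \ F).card : ℝ) ≤ ((bdry l' (↑F : Set X)).ncard : ℝ) := by
      have hsub : (↑(T \ F) : Set X) ⊆ bdry l' (↑F : Set X) := by
        intro w hw
        rw [Finset.coe_sdiff] at hw
        obtain ⟨hwT, hwF⟩ := hw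
        constructor
        · rcases Finset.mem_union.mp hwT with hh | hh
          · exact absurd hh hwF
          · obtain ⟨z, hz, hzw⟩ := Finset.mem_biUnion.mp hh
            have hbz := (hloc z).mem_toFinset.mp hzw
            have hdzw : dist w z ≤ l' := by
              rcases hbz with h' | h'
              · have := (hl z w h').trans (le_max_left l 1)
                rwa [dist_comm]
              · exact (hl w z h').trans (le_max_left l 1)
            exact ⟨z, hz, hdzw⟩
        · exact hwF
      have hcard : (T \ F).card ≤ (bdry l' (↑F : Set X)).ncard := by
        calc (T \ F).card = (↑(T \ F) : Set X).ncard := (Set.ncard_coe_finset _).symm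
          _ ≤ _ := Set.ncard_le_ncard hsub (finite_bdry hbg F.finite_toSet l')
      exact_mod_cast hcard
    calc (F.card : ℝ) ≤ ∑ w ∈ T \ F, ∑ z ∈ F, ‖b w z - b z w‖ := habs
      _ ≤ ∑ _w ∈ T \ F, (N * (2*M)) := Finset.sum_le_sum fun w _ => hinner w
      _ = (T \ F).card * (N * (2*M)) := by rw [Finset.sum_const, nsmul_eq_mul]
      _ ≤ ((bdry l' (↑F : Set X)).ncard : ℝ) * (N * (2*M)) := by
          apply mul_le_mul_of_nonneg_right hTF
          positivity
      _ = (N * (2*M)) * ((bdry l' (↑F : Set X)).ncard : ℝ) := by ring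
  -- conclude
  set K : ℝ := N * (2*M) + 1 with hK
  have hM0 : (0:ℝ) ≤ M := by
    obtain ⟨x, _⟩ := (hS 0).2
    exact (norm_nonneg (b x x)).trans (hM x x)
  have hKpos : (0:ℝ) < K := by positivity
  have hcons : ∀ i, ((S i).ncard : ℝ) ≤ K * ((bdry l' (S i)).ncard : ℝ) := by
    intro i
    have hFc : (↑((hS i).1.toFinset) : Set X) = S i := Set.Finite.coe_toFinset _
    have := key ((hS i).1.toFinset)
    rw [hFc] at this
    have hcard : ((hS i).1.toFinset.card : ℝ) = ((S i).ncard : ℝ) := by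
      rw [← Set.ncard_coe_finset, hFc]
    rw [hcard] at this
    have hb0 : (0:ℝ) ≤ ((bdry l' (S i)).ncard : ℝ) := by positivity
    nlinarith
  have hev := (hFol l' hl'pos).eventually (gt_mem_nhds (show (0:ℝ) < 1/K by positivity))
  obtain ⟨i, hi⟩ := hev.exists
  have hspos : (0:ℝ) < ((S i).ncard : ℝ) := by
    have := (Set.ncard_pos (hS i).1).mpr (hS i).2
    exact_mod_cast this
  have hlt : ((bdry l' (S i)).ncard : ℝ) * K < 1 * ((S i).ncard : ℝ) :=
    (div_lt_div_iff₀ hspos hKpos).mp hi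
  nlinarith [hcons i]

end Helpers

/-- A uniformly discrete space of bounded geometry is non-amenable iff its
fundamental class (the constant-`1` 0-chain) vanishes in `H₀^{uf}(X; ℤ)`. -/
theorem stmt14 {X : Type*} [MetricSpace X]
    (hud : UniformlyDiscrete X) (hbg : BoundedGeometry X) :
    ¬ Amenable X ↔ UFBoundsZero (fun _ : X => (1 : ℤ)) := by
  constructor
  · intro h
    obtain ⟨C, hC, r, hr, hiso⟩ := iso_of_not_amenable hbg h
    exact ufbz_of_iso hbg hC hr hiso
  · intro h
    exact not_amenable_of_ufbz hbg h
end

section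
/- If Z is a non-amenable uniformly discrete space of bounded geometry, then there exists a bijection f : Z × {0,1} → Z such that d(f(z,ε), z) is uniformly bounded and f(z,ε) ≠ z for all (z,ε). -/
open scoped ENNReal

/-- Coarse Lipschitz map. -/
def CoarseLipschitz {X Y : Type*} [MetricSpace X] [MetricSpace Y] (f : X → Y) : Prop :=
  ∃ K L : ℝ, ∀ x₁ x₂ : X, dist (f x₁) (f x₂) ≤ K * dist x₁ x₂ + L

open Set Function in
/-- Schröder–Bernstein, strengthened to record that the bijection is pieced
together from `f` and the partial inverse of `g`. -/
theorem sb_strong {α β : Type*} {f : α → β} {g : β → α} (hf : Function.Injective f)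
    (hg : Function.Injective g) :
    ∃ h : α → β, Function.Bijective h ∧ ∀ a, h a = f a ∨ g (h a) = a := by
  classical
  cases' isEmpty_or_nonempty β with hβ hβ
  · have hα : IsEmpty α := Function.isEmpty f
    exact ⟨f, ⟨fun a => (hα.false a).elim, fun b => (hβ.false b).elim⟩,
      fun a => (hα.false a).elim⟩
  set F : Set α →o Set α :=
    { toFun := fun s => (g '' (f '' s)ᶜ)ᶜ
      monotone' := fun s t hst =>
        compl_subset_compl.mpr <| image_mono <| compl_subset_compl.mpr <| image_mono hst }
  set s : Set α := F.lfp
  have hs : (g '' (f '' s)ᶜ)ᶜ = s := F.map_lfp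
  have hns : g '' (f '' s)ᶜ = sᶜ := compl_injective (by simp [hs])
  set g' := invFun g
  have g'g : LeftInverse g' g := leftInverse_invFun hg
  have hg'ns : g' '' sᶜ = (f '' s)ᶜ := by rw [← hns, g'g.image_image]
  set h : α → β := s.piecewise f g'
  have hsurj : Surjective h := by rw [← range_eq_univ, range_piecewise, hg'ns, union_compl_self]
  have hinj : Injective h := by
    refine (injective_piecewise_iff _).2 ⟨hf.injOn, ?_, ?_⟩
    · intro x hx y hy hxy
      obtain ⟨x', _, rfl⟩ : x ∈ g '' (f '' s)ᶜ := by rwa [hns]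
      obtain ⟨y', _, rfl⟩ : y ∈ g '' (f '' s)ᶜ := by rwa [hns]
      rw [g'g _, g'g _] at hxy
      rw [hxy]
    · intro x hx y hy hxy
      obtain ⟨y', hy', rfl⟩ : y ∈ g '' (f '' s)ᶜ := by rwa [hns]
      rw [g'g _] at hxy
      exact hy' ⟨x, hx, hxy⟩
  refine ⟨h, ⟨hinj, hsurj⟩, fun a => ?_⟩
  by_cases ha : a ∈ s
  · left; simp [h, Set.piecewise_eq_of_mem _ _ _ ha]
  · right
    obtain ⟨b, _, rfl⟩ : a ∈ g '' (f '' s)ᶜ := by rwa [hns]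
    simp [h, Set.piecewise_eq_of_notMem _ _ _ ha, g'g b]

/-- If `Z` is non-amenable (isoperimetric form), there is a bijection
`f : Z × {0,1} → Z` at uniformly bounded distance from the projection and nowhere
equal to it. -/
theorem stmt16 {Z : Type*} [MetricSpace Z]
    (hud : UniformlyDiscrete Z) (hbg : BoundedGeometry Z)
    (hna : ∀ C > (0 : ℝ), ∃ r > (0 : ℝ), ∀ S : Set Z, S.Finite →
      (S.ncard : ℝ) ≤ C * ((bdry r S).ncard : ℝ)) :
    ∃ f : Z × Bool → Z, Function.Bijective f ∧
      (∃ C : ℝ, ∀ p : Z × Bool, dist (f p) p.1 ≤ C) ∧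
      ∀ p : Z × Bool, f p ≠ p.1 := by
  classical
  obtain ⟨r, hr, H⟩ := hna (1/2) (by norm_num)
  obtain ⟨N, hN⟩ := hbg r
  -- candidate sets: punctured closed balls
  have hfin : ∀ p : Z × Bool, ({y : Z | dist y p.1 ≤ r ∧ y ≠ p.1}).Finite := fun p =>
    (hN p.1).1.subset (fun y hy => hy.1)
  set t : Z × Bool → Finset Z := fun p => (hfin p).toFinset with ht
  have hmem : ∀ p y, y ∈ t p ↔ dist y p.1 ≤ r ∧ y ≠ p.1 := by
    intro p y; simp [ht, Set.Finite.mem_toFinset]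
  -- Hall's condition
  have hall : ∀ s : Finset (Z × Bool), s.card ≤ (s.biUnion t).card := by
    intro s
    set T : Finset Z := s.image Prod.fst with hT
    -- s.card ≤ 2 * T.card
    have h1 : s.card ≤ T.card * 2 := by
      have hsub : s ⊆ T ×ˢ (Finset.univ : Finset Bool) := by
        intro p hp
        simp only [Finset.mem_product, Finset.mem_univ, and_true, hT, Finset.mem_image]
        exact ⟨p, hp, rfl⟩
      calc s.card ≤ (T ×ˢ (Finset.univ : Finset Bool)).card := Finset.card_le_card hsub
        _ = T.card * 2 := by simp [Finset.card_product]
    -- boundary bound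
    have hTfin : (T : Set Z).Finite := T.finite_toSet
    have h2 : ((T : Set Z).ncard : ℝ) ≤ (1/2) * ((bdry r (T : Set Z)).ncard : ℝ) :=
      H _ hTfin
    -- the boundary is contained in the biUnion
    have hsubB : bdry r (T : Set Z) ⊆ ↑(s.biUnion t) := by
      rintro y ⟨⟨a, haT, hya⟩, hyT⟩
      obtain ⟨p, hp, rfl⟩ : ∃ p ∈ s, p.1 = a := by
        simpa [hT, Finset.mem_image] using haT
      refine Finset.mem_coe.mpr (Finset.mem_biUnion.mpr ⟨p, hp, ?_⟩)
      rw [hmem]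
      exact ⟨hya, fun hy => hyT (by simpa [hy] using haT)⟩
    have h3 : (bdry r (T : Set Z)).ncard ≤ (s.biUnion t).card := by
      rw [← Set.ncard_coe_finset]
      exact Set.ncard_le_ncard hsubB (s.biUnion t).finite_toSet
    have hTcard : (T : Set Z).ncard = T.card := Set.ncard_coe_finset T
    have h2' : T.card * 2 ≤ (bdry r (T : Set Z)).ncard := by
      rw [hTcard] at h2
      have := h2
      -- turn the real inequality into a natural number one
      have : ((T.card * 2 : ℕ) : ℝ) ≤ (((bdry r (T : Set Z)).ncard : ℕ) : ℝ) := by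
        push_cast
        linarith
      exact_mod_cast this
    exact h1.trans (h2'.trans h3)
  -- Hall's marriage theorem
  obtain ⟨F, hFinj, hFmem⟩ := (Finset.all_card_le_biUnion_card_iff_exists_injective t).mp hall
  have hFdist : ∀ p, dist (F p) p.1 ≤ r := fun p => ((hmem p (F p)).mp (hFmem p)).1
  have hFne : ∀ p, F p ≠ p.1 := fun p => ((hmem p (F p)).mp (hFmem p)).2
  -- the reverse injection
  set G : Z → Z × Bool := fun z => (F (z, true), false) with hG
  have hGinj : Function.Injective G := by
    intro z₁ z₂ h
    have : F (z₁, true) = F (z₂, true) := congrArg Prod.fst h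
    have := hFinj this
    exact (Prod.mk.injEq _ _ _ _).mp this |>.1
  obtain ⟨h, hbij, hcase⟩ := sb_strong hFinj hGinj
  refine ⟨h, hbij, ⟨r, fun p => ?_⟩, fun p => ?_⟩
  · rcases hcase p with hc | hc
    · rw [hc]; exact hFdist p
    · have hp1 : p.1 = F (h p, true) := (congrArg Prod.fst hc).symm
      rw [hp1, dist_comm]
      exact hFdist (h p, true)
  · rcases hcase p with hc | hc
    · rw [hc]; exact hFne p
    · intro he
      have hp1 : p.1 = F (h p, true) := (congrArg Prod.fst hc).symm
      exact hFne (h p, true) (by rw [← hp1, ← he])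
end

section
/- If Γ₁ and Γ₂ are finitely generated groups and there is a bijective bilipschitz equivalence Γ₁ → Γ₂ (with respect to word metrics) sending 1 to 1, then for any finitely generated group G, the free products Γ₁ * G and Γ₂ * G are bilipschitz equivalent, via the map applying the equivalence letterwise to the Γ-syllables of reduced words. -/
/-- Word length of `h` with respect to a (symmetrized) generating set `S`. -/
noncomputable def wordLength {H : Type*} [Group H] (S : Set H) (h : H) : ℕ :=
  sInf {n : ℕ | ∃ l : List H, l.length = n ∧ (∀ x ∈ l, x ∈ S ∨ x⁻¹ ∈ S) ∧ l.prod = h}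

/-- Word metric distance associated to a generating set `S`. -/
noncomputable def wordDist {H : Type*} [Group H] (S : Set H) (x y : H) : ℕ :=
  wordLength S (x⁻¹ * y)

namespace WLaux

variable {H H' : Type*} [Group H] [Group H']

lemma exists_rep {S : Set H} (hS : Subgroup.closure S = ⊤) (h : H) :
    ∃ l : List H, (∀ x ∈ l, x ∈ S ∨ x⁻¹ ∈ S) ∧ l.prod = h := by
  have hmem : h ∈ Subgroup.closure S := hS ▸ Subgroup.mem_top h
  induction hmem using Subgroup.closure_induction with
  | mem x hx => exact ⟨[x], by simpa using Or.inl hx, by simp⟩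
  | one => exact ⟨[], by simp, by simp⟩
  | mul x y hx hy ihx ihy =>
    obtain ⟨l1, hl1, hp1⟩ := ihx
    obtain ⟨l2, hl2, hp2⟩ := ihy
    refine ⟨l1 ++ l2, ?_, by simp [hp1, hp2]⟩
    intro z hz
    rcases List.mem_append.1 hz with h | h
    exacts [hl1 z h, hl2 z h]
  | inv x hx ih =>
    obtain ⟨l, hl, hp⟩ := ih
    refine ⟨(l.map (·⁻¹)).reverse, ?_, ?_⟩
    · intro z hz
      simp only [List.mem_reverse, List.mem_map] at hz
      obtain ⟨a, ha, rfl⟩ := hz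
      simpa [or_comm] using hl a ha
    · rw [← hp, List.prod_reverse_noncomm]
      simp

lemma wordLength_le {S : Set H} {h : H} {l : List H}
    (hl : ∀ x ∈ l, x ∈ S ∨ x⁻¹ ∈ S) (hp : l.prod = h) :
    wordLength S h ≤ l.length :=
  Nat.sInf_le ⟨l, rfl, hl, hp⟩

lemma wordLength_spec {S : Set H} (hS : Subgroup.closure S = ⊤) (h : H) :
    ∃ l : List H, l.length = wordLength S h ∧ (∀ x ∈ l, x ∈ S ∨ x⁻¹ ∈ S) ∧ l.prod = h := by
  have hne : {n : ℕ | ∃ l : List H, l.length = n ∧ (∀ x ∈ l, x ∈ S ∨ x⁻¹ ∈ S) ∧ l.prod = h}.Nonempty := by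
    obtain ⟨l, hl, hp⟩ := exists_rep hS h
    exact ⟨l.length, l, rfl, hl, hp⟩
  exact Nat.sInf_mem hne

lemma wordLength_one (S : Set H) : wordLength S 1 = 0 :=
  Nat.le_zero.mp (wordLength_le (l := []) (by simp) (by simp))

lemma wordLength_mul_le {S : Set H} (hS : Subgroup.closure S = ⊤) (a b : H) :
    wordLength S (a * b) ≤ wordLength S a + wordLength S b := by
  obtain ⟨l1, hl1, hg1, hp1⟩ := wordLength_spec hS a
  obtain ⟨l2, hl2, hg2, hp2⟩ := wordLength_spec hS b
  calc wordLength S (a * b) ≤ (l1 ++ l2).length := wordLength_le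
        (by intro z hz; rcases List.mem_append.1 hz with h | h; exacts [hg1 z h, hg2 z h])
        (by simp [hp1, hp2])
    _ = wordLength S a + wordLength S b := by simp [hl1, hl2]

/-- transport of word length along a group isomorphism -/
lemma wordLength_equiv (e : H ≃* H') (S : Set H) (z : H) :
    wordLength (⇑e '' S) (e z) = wordLength S z := by
  unfold wordLength
  congr 1
  ext n
  constructor
  · rintro ⟨l, hlen, hg, hp⟩
    refine ⟨l.map e.symm, by simp [hlen], ?_, ?_⟩
    · intro x hx
      simp only [List.mem_map] at hx
      obtain ⟨a, ha, rfl⟩ := hx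
      rcases hg a ha with h | h
      · obtain ⟨s, hs, rfl⟩ := h
        exact Or.inl (by simpa using hs)
      · obtain ⟨s, hs, hs'⟩ := h
        refine Or.inr ?_
        have h2 : (e.symm a)⁻¹ = s := by
          apply e.injective
          rw [map_inv]
          simp [hs']
        rw [h2]; exact hs
    · have : (l.map e.symm).prod = e.symm l.prod := by
        rw [← map_list_prod]
      rw [this, hp]; simp
  · rintro ⟨l, hlen, hg, hp⟩
    refine ⟨l.map e, by simp [hlen], ?_, ?_⟩
    · intro x hx
      simp only [List.mem_map] at hx
      obtain ⟨a, ha, rfl⟩ := hx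
      rcases hg a ha with h | h
      · exact Or.inl ⟨a, h, rfl⟩
      · exact Or.inr ⟨a⁻¹, h, by simp⟩
    · have : (l.map e).prod = e l.prod := by
        rw [← map_list_prod]
      rw [this, hp]

lemma closure_equiv_image_top (e : H ≃* H') {S : Set H} (hS : Subgroup.closure S = ⊤) :
    Subgroup.closure (⇑e '' S) = ⊤ := by
  have := MonoidHom.map_closure e.toMonoidHom S
  rw [hS] at this
  rw [show (⇑e '' S) = (⇑e.toMonoidHom '' S) from rfl, ← this]
  exact Subgroup.map_top_of_surjective _ e.surjective

end WLaux

namespace WLaux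

set_option linter.unusedSectionVars false

open Monoid Monoid.CoprodI Monoid.CoprodI.Word

variable {ι : Type*} [DecidableEq ι] {M : ι → Type*} {M' : ι → Type*}
  [∀ i, Group (M i)] [∀ i, Group (M' i)]
  [∀ i, DecidableEq (M i)] [∀ i, DecidableEq (M' i)]

lemma equiv_symm_eq (w : Word M) : Word.equiv.symm w = w.prod := rfl

lemma equiv_prod (w : Word M) : Word.equiv w.prod = w := by
  rw [← equiv_symm_eq]; exact Equiv.apply_symm_apply _ _

lemma prod_equiv (a : CoprodI M) : (Word.equiv a).prod = a := by
  rw [← equiv_symm_eq]; exact Equiv.symm_apply_apply _ _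

variable (θ : ∀ i, M i ≃ M' i) (hθ1 : ∀ i, θ i 1 = 1)

/-- the letterwise image of a reduced word -/
def mapWord (w : Word M) : Word M' where
  toList := w.toList.map fun l => ⟨l.1, θ l.1 l.2⟩
  ne_one := by
    intro l hl
    simp only [List.mem_map] at hl
    obtain ⟨a, ha, rfl⟩ := hl
    intro h
    exact w.ne_one a ha ((θ a.1).injective (h.trans (hθ1 a.1).symm))
  chain_ne := List.isChain_map_of_isChain (fun (l : Σ i, M i) => (⟨l.1, θ l.1 l.2⟩ : Σ i, M' i)) (fun a b hab => hab) w.chain_ne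

/-- list-level product of the letterwise image -/
def P (L : List (Σ i, M i)) : CoprodI M' :=
  (L.map fun l => of (θ l.1 l.2)).prod

lemma prod_mapWord (w : Word M) : (mapWord θ hθ1 w).prod = P θ w.toList := by
  simp only [Word.prod, mapWord, List.map_map, P]
  rfl

lemma P_append (L1 L2 : List (Σ i, M i)) : P θ (L1 ++ L2) = P θ L1 * P θ L2 := by
  simp [P]

lemma P_singleton (i : ι) (m : M i) : P θ [⟨i, m⟩] = of (θ i m) := by
  simp [P]

/-- the letterwise map on the free product -/
def ΘI (a : CoprodI M) : CoprodI M' :=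
  (mapWord θ hθ1 (Word.equiv a)).prod

lemma ΘI_eq (a : CoprodI M) : ΘI θ hθ1 a = P θ (Word.equiv a).toList := by
  rw [ΘI, prod_mapWord]

lemma ΘI_prod (w : Word M) : ΘI θ hθ1 w.prod = P θ w.toList := by
  rw [ΘI_eq, equiv_prod]

lemma ΘI_one : ΘI θ hθ1 1 = 1 := by
  have : (Word.empty : Word M).prod = 1 := rfl
  rw [← this, ΘI_prod]
  simp [P, Word.empty]

/-- append one letter to a reduced word -/
def snocWord (w : Word M) (i : ι) (m : M i) (h1 : m ≠ 1)
    (h2 : ∀ l ∈ w.toList.getLast?, l.1 ≠ i) : Word M where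
  toList := w.toList ++ [⟨i, m⟩]
  ne_one := by
    intro l hl
    rcases List.mem_append.1 hl with h | h
    · exact w.ne_one l h
    · simp only [List.mem_singleton] at h
      subst h; exact h1
  chain_ne := List.isChain_append.2 ⟨w.chain_ne, List.isChain_singleton _, by
    intro x hx y hy
    simp only [List.head?_cons, Option.mem_def, Option.some.injEq] at hy
    subst hy
    exact h2 x hx⟩

lemma prod_snocWord (w : Word M) (i : ι) (m : M i) (h1 : m ≠ 1)
    (h2 : ∀ l ∈ w.toList.getLast?, l.1 ≠ i) :
    (snocWord w i m h1 h2).prod = w.prod * of m := by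
  simp [snocWord, Word.prod, List.map_append]

/-- single letter word -/
def singleWord (i : ι) (m : M i) (h1 : m ≠ 1) : Word M where
  toList := [⟨i, m⟩]
  ne_one := by simpa using h1
  chain_ne := List.isChain_singleton _

lemma prod_singleWord (i : ι) (m : M i) (h1 : m ≠ 1) :
    (singleWord i m h1).prod = of m := by
  simp [singleWord, Word.prod]

lemma ΘI_of (i : ι) (m : M i) : ΘI θ hθ1 (of m) = of (θ i m) := by
  by_cases hm : m = 1
  · subst hm
    rw [MonoidHom.map_one, ΘI_one, hθ1, MonoidHom.map_one]
  · rw [← prod_singleWord i m hm, ΘI_prod, singleWord, P_singleton]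

lemma key_step (a : CoprodI M) (i : ι) (m : M i) :
    ∃ x : M i, (ΘI θ hθ1 a)⁻¹ * ΘI θ hθ1 (a * of m) = of ((θ i x)⁻¹ * θ i (x * m)) := by
  set w := Word.equiv a with hw
  have ha : w.prod = a := prod_equiv a
  rcases List.eq_nil_or_concat w.toList with hnil | ⟨L, last, hL⟩
  · -- a = 1
    have ha1 : a = 1 := by
      rw [← ha]; unfold Word.prod; rw [hnil]; simp
    refine ⟨1, ?_⟩
    rw [ha1, ΘI_one, one_mul, inv_one, one_mul, hθ1, inv_one, one_mul, one_mul]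
    exact ΘI_of θ hθ1 i m
  · obtain ⟨j, x⟩ := last
    rw [List.concat_eq_append] at hL
    have hchain := w.chain_ne
    rw [hL] at hchain
    have hx1 : x ≠ 1 := w.ne_one ⟨j, x⟩ (hL ▸ List.mem_append_right _ (List.mem_singleton.2 rfl))
    have hLchain : List.Chain' (fun l l' : (Σ i, M i) => l.1 ≠ l'.1) L :=
      (List.isChain_append.1 hchain).1
    have hjunc : ∀ p ∈ L.getLast?, p.1 ≠ j := by
      intro p hp
      exact (List.isChain_append.1 hchain).2.2 p hp ⟨j, x⟩ (by simp)
    set w' : Word M := ⟨L, fun l hl => w.ne_one l (hL ▸ List.mem_append_left _ hl), hLchain⟩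
      with hw'
    have ha' : a = w'.prod * of x := by
      rw [← ha]
      unfold Word.prod
      rw [hL]
      simp [w']
    have hPa : ΘI θ hθ1 a = P θ L * of (θ j x) := by
      rw [ΘI_eq, ← hw, hL, ← P_singleton θ j x, P_append]
    by_cases hji : j = i
    · subst hji
      by_cases hxm : x * m = 1
      · refine ⟨x, ?_⟩
        have : a * of m = w'.prod := by
          rw [ha', mul_assoc, ← MonoidHom.map_mul, hxm, MonoidHom.map_one, mul_one]
        rw [this, ΘI_prod, hPa, hxm, hθ1, mul_inv_rev]
        simp [w']
      · refine ⟨x, ?_⟩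
        have hprod : a * of m = (snocWord w' j (x * m) hxm hjunc).prod := by
          rw [prod_snocWord, ha', mul_assoc, ← MonoidHom.map_mul]
        rw [hprod, ΘI_prod, hPa]
        have hPP : P θ ((snocWord w' j (x * m) hxm hjunc).toList)
            = P θ L * of (θ j (x * m)) := by
          show P θ (L ++ [⟨j, x * m⟩]) = _
          rw [P_append, P_singleton]
        rw [hPP, mul_inv_rev, MonoidHom.map_mul, MonoidHom.map_inv]
        group
    · by_cases hm : m = 1
      · refine ⟨1, ?_⟩
        simp [hm, hθ1]
      · refine ⟨1, ?_⟩
        have hlast : ∀ l ∈ w.toList.getLast?, l.1 ≠ i := by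
          intro l hl
          rw [hL] at hl
          simp only [List.getLast?_append, List.getLast?_singleton] at hl
          have h' : (⟨j, x⟩ : Σ i, M i) = l := by simpa using hl
          rw [← h']
          exact hji
        have hprod : a * of m = (snocWord w i m hm hlast).prod := by
          rw [prod_snocWord, ha]
        rw [hprod, ΘI_prod]
        have hPP : P θ ((snocWord w i m hm hlast).toList)
            = P θ w.toList * of (θ i m) := by
          show P θ (w.toList ++ [⟨i, m⟩]) = _
          rw [P_append, P_singleton]
        have hPw : P θ w.toList = ΘI θ hθ1 a := by rw [ΘI_eq, hw]
        rw [hPP, hPw]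
        simp [hθ1]

variable (S : ∀ i, Set (M i)) (S' : ∀ i, Set (M' i))

lemma closure_union_top (hS : ∀ i, Subgroup.closure (S i) = ⊤) :
    Subgroup.closure (⋃ i, (of : M i →* CoprodI M) '' S i) = ⊤ := by
  rw [eq_top_iff]
  intro z _
  induction z using CoprodI.induction_on with
  | one => exact one_mem _
  | of i m =>
    have hm : m ∈ Subgroup.closure (S i) := (hS i) ▸ Subgroup.mem_top m
    have : of m ∈ Subgroup.map (of : M i →* CoprodI M) (Subgroup.closure (S i)) :=
      Subgroup.mem_map_of_mem _ hm
    rw [MonoidHom.map_closure] at this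
    exact Subgroup.closure_mono (Set.subset_iUnion (fun i => (of : M i →* CoprodI M) '' S i) i) this
  | mul x y hx hy => exact mul_mem (hx (Subgroup.mem_top x)) (hy (Subgroup.mem_top y))

lemma wordLength_of_le {i : ι} (hSi : Subgroup.closure (S i) = ⊤) (m : M i) :
    wordLength (⋃ i, (of : M i →* CoprodI M) '' S i) (of m) ≤ wordLength (S i) m := by
  obtain ⟨l, hlen, hg, hp⟩ := wordLength_spec hSi m
  rw [← hlen, show l.length = (l.map (of : M i →* CoprodI M)).length by simp]
  apply wordLength_le (l := l.map (of : M i →* CoprodI M))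
  · intro z hz
    simp only [List.mem_map] at hz
    obtain ⟨b, hb, rfl⟩ := hz
    rcases hg b hb with h | h
    · exact Or.inl (Set.mem_iUnion.2 ⟨i, b, h, rfl⟩)
    · exact Or.inr (Set.mem_iUnion.2 ⟨i, b⁻¹, h, by simp⟩)
  · rw [← hp, ← map_list_prod]

variable {K : ℝ}

lemma step_bound (hS' : ∀ i, Subgroup.closure (S' i) = ⊤)
    (hH : ∀ (i : ι) (x y : M i),
      (wordLength (S' i) ((θ i x)⁻¹ * θ i y) : ℝ) ≤ K * wordLength (S i) (x⁻¹ * y))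
    (a : CoprodI M) (i : ι) (m : M i) :
    (wordLength (⋃ i, (of : M' i →* CoprodI M') '' S' i)
        ((ΘI θ hθ1 a)⁻¹ * ΘI θ hθ1 (a * of m)) : ℝ) ≤ K * wordLength (S i) m := by
  obtain ⟨x, hx⟩ := key_step θ hθ1 a i m
  rw [hx]
  calc (wordLength (⋃ i, (of : M' i →* CoprodI M') '' S' i) (of ((θ i x)⁻¹ * θ i (x * m))) : ℝ)
      ≤ wordLength (S' i) ((θ i x)⁻¹ * θ i (x * m)) := by
        exact_mod_cast wordLength_of_le S' (hS' i) _
    _ ≤ K * wordLength (S i) (x⁻¹ * (x * m)) := hH i x (x * m)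
    _ = K * wordLength (S i) m := by rw [inv_mul_cancel_left]

lemma chain_bound (hS' : ∀ i, Subgroup.closure (S' i) = ⊤) (hK : 0 ≤ K)
    (hH : ∀ (i : ι) (x y : M i),
      (wordLength (S' i) ((θ i x)⁻¹ * θ i y) : ℝ) ≤ K * wordLength (S i) (x⁻¹ * y))
    (l : List (CoprodI M))
    (hl : ∀ g ∈ l, g ∈ (⋃ i, (of : M i →* CoprodI M) '' S i)
      ∨ g⁻¹ ∈ (⋃ i, (of : M i →* CoprodI M) '' S i)) :
    ∀ a : CoprodI M, (wordLength (⋃ i, (of : M' i →* CoprodI M') '' S' i)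
      ((ΘI θ hθ1 a)⁻¹ * ΘI θ hθ1 (a * l.prod)) : ℝ) ≤ K * l.length := by
  induction l with
  | nil =>
    intro a
    simp [wordLength_one]
  | cons g l ih =>
    intro a
    -- g = of m for some generator m
    have hg : ∃ (i : ι) (m : M i), g = of m ∧ wordLength (S i) m ≤ 1 := by
      rcases hl g List.mem_cons_self with h | h
      · obtain ⟨i, ⟨m, hm, rfl⟩⟩ := Set.mem_iUnion.1 h
        exact ⟨i, m, rfl, wordLength_le (l := [m]) (by simpa using Or.inl hm) (by simp)⟩
      · obtain ⟨i, ⟨m, hm, hmg⟩⟩ := Set.mem_iUnion.1 h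
        refine ⟨i, m⁻¹, ?_, wordLength_le (l := [m⁻¹]) (by simpa using Or.inr hm) (by simp)⟩
        rw [← inv_inv g, ← hmg, MonoidHom.map_inv]
    obtain ⟨i, m, rfl, hm1⟩ := hg
    have hsub : (wordLength (⋃ i, (of : M' i →* CoprodI M') '' S' i)
        ((ΘI θ hθ1 a)⁻¹ * ΘI θ hθ1 (a * (of m :: l).prod)) : ℝ)
        ≤ (wordLength (⋃ i, (of : M' i →* CoprodI M') '' S' i)
            ((ΘI θ hθ1 a)⁻¹ * ΘI θ hθ1 (a * of m)) : ℝ)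
          + (wordLength (⋃ i, (of : M' i →* CoprodI M') '' S' i)
            ((ΘI θ hθ1 (a * of m))⁻¹ * ΘI θ hθ1 ((a * of m) * l.prod)) : ℝ) := by
      have := wordLength_mul_le (closure_union_top S' hS')
        ((ΘI θ hθ1 a)⁻¹ * ΘI θ hθ1 (a * of m))
        ((ΘI θ hθ1 (a * of m))⁻¹ * ΘI θ hθ1 ((a * of m) * l.prod))
      rw [show ((ΘI θ hθ1 a)⁻¹ * ΘI θ hθ1 (a * of m)) *
          ((ΘI θ hθ1 (a * of m))⁻¹ * ΘI θ hθ1 ((a * of m) * l.prod))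
          = (ΘI θ hθ1 a)⁻¹ * ΘI θ hθ1 (a * (of m :: l).prod) by
        rw [List.prod_cons, ← mul_assoc]; group] at this
      exact_mod_cast this
    refine hsub.trans ?_
    have h1 : (wordLength (⋃ i, (of : M' i →* CoprodI M') '' S' i)
        ((ΘI θ hθ1 a)⁻¹ * ΘI θ hθ1 (a * of m)) : ℝ) ≤ K := by
      refine (step_bound θ hθ1 S S' hS' hH a i m).trans ?_
      have : (wordLength (S i) m : ℝ) ≤ 1 := by exact_mod_cast hm1
      nlinarith
    have h2 := ih (fun g hg => hl g (List.mem_cons_of_mem _ hg)) (a * of m)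
    calc _ ≤ K + K * l.length := add_le_add h1 h2
      _ = K * (of m :: l).length := by simp [List.length_cons]; ring

/-- The main generic estimate for the letterwise map on a free product. -/
theorem main_bound (hS : ∀ i, Subgroup.closure (S i) = ⊤)
    (hS' : ∀ i, Subgroup.closure (S' i) = ⊤) (hK : 0 ≤ K)
    (hH : ∀ (i : ι) (x y : M i),
      (wordLength (S' i) ((θ i x)⁻¹ * θ i y) : ℝ) ≤ K * wordLength (S i) (x⁻¹ * y))
    (u v : CoprodI M) :
    (wordLength (⋃ i, (of : M' i →* CoprodI M') '' S' i)
      ((ΘI θ hθ1 u)⁻¹ * ΘI θ hθ1 v) : ℝ)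
      ≤ K * wordLength (⋃ i, (of : M i →* CoprodI M) '' S i) (u⁻¹ * v) := by
  obtain ⟨l, hlen, hg, hp⟩ := wordLength_spec (closure_union_top S hS) (u⁻¹ * v)
  have := chain_bound θ hθ1 S S' hS' hK hH l hg u
  rw [hp, mul_inv_cancel_left, hlen] at this
  exact this

lemma mapWord_mapWord (θ' : ∀ i, M' i ≃ M i) (hθ'1 : ∀ i, θ' i 1 = 1)
    (hinv : ∀ i x, θ' i (θ i x) = x) (w : Word M) :
    mapWord θ' hθ'1 (mapWord θ hθ1 w) = w := by
  apply Word.ext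
  show (w.toList.map _).map _ = w.toList
  rw [List.map_map]
  have : ((fun l : (Σ i, M' i) => (⟨l.1, θ' l.1 l.2⟩ : Σ i, M i)) ∘
      (fun l : (Σ i, M i) => (⟨l.1, θ l.1 l.2⟩ : Σ i, M' i))) = id := by
    funext l
    cases l with
    | mk i x => simp [Function.comp, hinv]
  rw [this, List.map_id]

lemma ΘI_leftInverse (θ' : ∀ i, M' i ≃ M i) (hθ'1 : ∀ i, θ' i 1 = 1)
    (hinv : ∀ i x, θ' i (θ i x) = x) (a : CoprodI M) :
    ΘI θ' hθ'1 (ΘI θ hθ1 a) = a := by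
  rw [ΘI, ΘI, equiv_prod, mapWord_mapWord θ hθ1 θ' hθ'1 hinv, prod_equiv]

end WLaux

namespace WLaux

open Monoid

universe u v

variable (A : Type u) (B : Type v) [Group A] [Group B]

/-- The `Bool`-indexed family corresponding to the pair `A`, `B`. -/
def famC : Bool → Type (max u v) := fun b => cond b (ULift.{v} A) (ULift.{u} B)

instance : ∀ b, Group (famC A B b)
  | true => inferInstanceAs (Group (ULift A))
  | false => inferInstanceAs (Group (ULift B))

noncomputable instance : ∀ b, DecidableEq (famC A B b) := fun _ => Classical.decEq _

/-- From the binary coproduct to the indexed coproduct. -/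
def toI : Coprod A B →* CoprodI (famC A B) :=
  Coprod.lift
    ((CoprodI.of (M := famC A B) (i := true)).comp (MulEquiv.ulift.symm.toMonoidHom))
    ((CoprodI.of (M := famC A B) (i := false)).comp (MulEquiv.ulift.symm.toMonoidHom))

/-- From the indexed coproduct to the binary coproduct. -/
def fromI : CoprodI (famC A B) →* Coprod A B :=
  CoprodI.lift (fun b => Bool.rec (motive := fun b => famC A B b →* Coprod A B)
    ((Coprod.inr : B →* Coprod A B).comp MulEquiv.ulift.toMonoidHom)
    ((Coprod.inl : A →* Coprod A B).comp MulEquiv.ulift.toMonoidHom) b)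

/-- coercion `A ≃* famC A B true` -/
def upT : A ≃* famC A B true := MulEquiv.ulift.symm

/-- coercion `B ≃* famC A B false` -/
def upF : B ≃* famC A B false := MulEquiv.ulift.symm

lemma toI_inl (a : A) : toI A B (Coprod.inl a) = CoprodI.of (upT A B a) := by
  simp [toI, Coprod.lift_apply_inl]
  rfl

lemma toI_inr (b : B) : toI A B (Coprod.inr b) = CoprodI.of (upF A B b) := by
  simp [toI, Coprod.lift_apply_inr]
  rfl

lemma fromI_of_true (x : famC A B true) :
    fromI A B (CoprodI.of x) = Coprod.inl ((upT A B).symm x) := by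
  simp [fromI, CoprodI.lift_of]
  rfl

lemma fromI_of_false (x : famC A B false) :
    fromI A B (CoprodI.of x) = Coprod.inr ((upF A B).symm x) := by
  simp [fromI, CoprodI.lift_of]
  rfl

/-- The canonical isomorphism between the binary and indexed coproducts. -/
noncomputable def eqvI : Coprod A B ≃* CoprodI (famC A B) :=
  MonoidHom.toMulEquiv (toI A B) (fromI A B)
    (by
      apply Coprod.hom_ext
      · ext a
        simp [MonoidHom.comp_apply, toI_inl, fromI_of_true]
      · ext b
        simp [MonoidHom.comp_apply, toI_inr, fromI_of_false])
    (by
      apply CoprodI.ext_hom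
      intro i
      cases i
      · ext x
        simp [MonoidHom.comp_apply, fromI_of_false, toI_inr]
      · ext x
        simp [MonoidHom.comp_apply, fromI_of_true, toI_inl])

lemma eqvI_inl (a : A) : eqvI A B (Coprod.inl a) = CoprodI.of (upT A B a) := toI_inl A B a

lemma eqvI_inr (b : B) : eqvI A B (Coprod.inr b) = CoprodI.of (upF A B b) := toI_inr A B b

end WLaux

namespace WLaux

open Monoid

variable (A : Type*) (B : Type*) [Group A] [Group B]

/-- Pair of generating sets as a family. -/
def setFam (SA : Set A) (SB : Set B) : ∀ b, Set (famC A B b)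
  | true => ⇑(upT A B) '' SA
  | false => ⇑(upF A B) '' SB

lemma setFam_closure {SA : Set A} {SB : Set B} (hA : Subgroup.closure SA = ⊤)
    (hB : Subgroup.closure SB = ⊤) : ∀ b, Subgroup.closure (setFam A B SA SB b) = ⊤
  | true => closure_equiv_image_top (upT A B) hA
  | false => closure_equiv_image_top (upF A B) hB

lemma image_gen (SA : Set A) (SB : Set B) :
    ⇑(eqvI A B) '' ((⇑(Coprod.inl : A →* Coprod A B) '' SA) ∪
        (⇑(Coprod.inr : B →* Coprod A B) '' SB)) =
      ⋃ b, ⇑(CoprodI.of : famC A B b →* CoprodI (famC A B)) '' (setFam A B SA SB b) := by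
  have hb : (⋃ b, ⇑(CoprodI.of : famC A B b →* CoprodI (famC A B)) '' (setFam A B SA SB b))
      = (⇑(CoprodI.of : famC A B true →* CoprodI (famC A B)) '' (setFam A B SA SB true)) ∪
        (⇑(CoprodI.of : famC A B false →* CoprodI (famC A B)) '' (setFam A B SA SB false)) := by
    ext z
    simp [Set.mem_iUnion, Bool.exists_bool, or_comm]
  rw [hb, Set.image_union]
  congr 1
  · rw [Set.image_image, setFam, Set.image_image]
    apply Set.image_congr
    intro a _
    exact eqvI_inl A B a
  · rw [Set.image_image, setFam, Set.image_image]
    apply Set.image_congr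
    intro b _
    exact eqvI_inr A B b

variable {Γ₁ Γ₂ G : Type*} [Group Γ₁] [Group Γ₂] [Group G]

/-- the letterwise family of bijections -/
def thetaFam (ϑ : Γ₁ ≃ Γ₂) : ∀ b, famC Γ₁ G b ≃ famC Γ₂ G b
  | true => ((upT Γ₁ G).toEquiv.symm.trans ϑ).trans (upT Γ₂ G).toEquiv
  | false => (upF Γ₁ G).toEquiv.symm.trans (upF Γ₂ G).toEquiv

lemma thetaFam_upT (ϑ : Γ₁ ≃ Γ₂) (a : Γ₁) :
    thetaFam (G := G) ϑ true (upT Γ₁ G a) = upT Γ₂ G (ϑ a) := by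
  simp [thetaFam]

lemma thetaFam_upF (ϑ : Γ₁ ≃ Γ₂) (g : G) :
    thetaFam (G := G) ϑ false (upF Γ₁ G g) = upF Γ₂ G g := by
  simp [thetaFam]

lemma thetaFam_one (ϑ : Γ₁ ≃ Γ₂) (h1 : ϑ 1 = 1) : ∀ b, thetaFam (G := G) ϑ b 1 = 1
  | true => by
    have : (1 : famC Γ₁ G true) = upT Γ₁ G 1 := (map_one _).symm
    rw [this, thetaFam_upT, h1, map_one]
  | false => by
    have : (1 : famC Γ₁ G false) = upF Γ₁ G 1 := (map_one _).symm
    rw [this, thetaFam_upF, map_one]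

lemma thetaFam_inv (ϑ : Γ₁ ≃ Γ₂) : ∀ b (x : famC Γ₁ G b),
    thetaFam (G := G) ϑ.symm b (thetaFam (G := G) ϑ b x) = x
  | true, x => by simp [thetaFam]
  | false, x => by simp [thetaFam]

lemma thetaFam_inv' (ϑ : Γ₁ ≃ Γ₂) : ∀ b (x : famC Γ₂ G b),
    thetaFam (G := G) ϑ b (thetaFam (G := G) ϑ.symm b x) = x
  | true, x => by simp [thetaFam]
  | false, x => by simp [thetaFam]

end WLaux

namespace WLaux

open Monoid

variable {Γ₁ Γ₂ G : Type*} [Group Γ₁] [Group Γ₂] [Group G]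

lemma hH_of_hbl {S₁ : Set Γ₁} {S₂ : Set Γ₂} {T : Set G} {K : ℝ} (hK : 1 ≤ K)
    (ϑ : Γ₁ ≃ Γ₂)
    (hbl2 : ∀ x y : Γ₁, (wordLength S₂ ((ϑ x)⁻¹ * ϑ y) : ℝ) ≤ K * wordLength S₁ (x⁻¹ * y)) :
    ∀ b (x y : famC Γ₁ G b),
      (wordLength (setFam Γ₂ G S₂ T b)
          ((thetaFam (G := G) ϑ b x)⁻¹ * thetaFam (G := G) ϑ b y) : ℝ)
        ≤ K * wordLength (setFam Γ₁ G S₁ T b) (x⁻¹ * y) := by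
  intro b x y
  cases b
  · -- false : the G factor
    set u := (upF Γ₁ G).symm x with hu
    set v := (upF Γ₁ G).symm y with hv
    have hx : x = upF Γ₁ G u := (MulEquiv.apply_symm_apply _ _).symm
    have hy : y = upF Γ₁ G v := (MulEquiv.apply_symm_apply _ _).symm
    rw [hx, hy, thetaFam_upF, thetaFam_upF, ← map_inv, ← map_mul, ← map_inv, ← map_mul]
    show (wordLength (⇑(upF Γ₂ G) '' T) (upF Γ₂ G (u⁻¹ * v)) : ℝ)
      ≤ K * wordLength (⇑(upF Γ₁ G) '' T) (upF Γ₁ G (u⁻¹ * v))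
    rw [wordLength_equiv (upF Γ₂ G) T, wordLength_equiv (upF Γ₁ G) T]
    exact le_mul_of_one_le_left (Nat.cast_nonneg _) hK
  · -- true : the Γ factor
    set u := (upT Γ₁ G).symm x with hu
    set v := (upT Γ₁ G).symm y with hv
    have hx : x = upT Γ₁ G u := (MulEquiv.apply_symm_apply _ _).symm
    have hy : y = upT Γ₁ G v := (MulEquiv.apply_symm_apply _ _).symm
    rw [hx, hy, thetaFam_upT, thetaFam_upT, ← map_inv (upT Γ₂ G), ← map_mul (upT Γ₂ G),
      ← map_inv (upT Γ₁ G), ← map_mul (upT Γ₁ G)]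
    show (wordLength (⇑(upT Γ₂ G) '' S₂) (upT Γ₂ G ((ϑ u)⁻¹ * ϑ v)) : ℝ)
      ≤ K * wordLength (⇑(upT Γ₁ G) '' S₁) (upT Γ₁ G (u⁻¹ * v))
    rw [wordLength_equiv (upT Γ₂ G) S₂, wordLength_equiv (upT Γ₁ G) S₁]
    exact hbl2 u v

end WLaux

namespace WLaux

open Monoid

variable (A : Type*) (B : Type*) [Group A] [Group B]

lemma wordDist_transport (SA : Set A) (SB : Set B) (z w : Coprod A B) :
    wordDist ((⇑(Coprod.inl : A →* Coprod A B) '' SA) ∪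
        (⇑(Coprod.inr : B →* Coprod A B) '' SB)) z w
      = wordLength (⋃ b, ⇑(CoprodI.of : famC A B b →* CoprodI (famC A B)) ''
          (setFam A B SA SB b)) ((eqvI A B z)⁻¹ * eqvI A B w) := by
  calc wordDist ((⇑(Coprod.inl : A →* Coprod A B) '' SA) ∪
        (⇑(Coprod.inr : B →* Coprod A B) '' SB)) z w
      = wordLength ((⇑(Coprod.inl : A →* Coprod A B) '' SA) ∪
        (⇑(Coprod.inr : B →* Coprod A B) '' SB)) (z⁻¹ * w) := rfl
    _ = wordLength (⇑(eqvI A B) '' ((⇑(Coprod.inl : A →* Coprod A B) '' SA) ∪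
        (⇑(Coprod.inr : B →* Coprod A B) '' SB))) (eqvI A B (z⁻¹ * w)) :=
        (wordLength_equiv (eqvI A B) _ _).symm
    _ = _ := by rw [image_gen, map_mul, map_inv]

end WLaux

open WLaux in
set_option maxHeartbeats 2000000 in
/-- If `θ : Γ₁ → Γ₂` is a bijective bilipschitz equivalence of finitely generated
groups (word metrics) with `θ 1 = 1`, then for any finitely generated group `G`
the free products `Γ₁ * G` and `Γ₂ * G` are bilipschitz equivalent, via a map
agreeing with `θ` on `Γ₁`-syllables and with the identity on `G`-syllables. -/
theorem stmt19 {Γ₁ Γ₂ G : Type*} [Group Γ₁] [Group Γ₂] [Group G]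
    (S₁ : Finset Γ₁) (S₂ : Finset Γ₂) (T : Finset G)
    (hS₁ : Subgroup.closure (S₁ : Set Γ₁) = ⊤)
    (hS₂ : Subgroup.closure (S₂ : Set Γ₂) = ⊤)
    (hT : Subgroup.closure (T : Set G) = ⊤)
    (θ : Γ₁ → Γ₂) (hθ : Function.Bijective θ) (hθ1 : θ 1 = 1)
    (K : ℝ) (hK : 1 ≤ K)
    (hbl : ∀ x y : Γ₁,
      (wordDist (S₁ : Set Γ₁) x y : ℝ) ≤ K * (wordDist (S₂ : Set Γ₂) (θ x) (θ y) : ℝ) ∧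
      (wordDist (S₂ : Set Γ₂) (θ x) (θ y) : ℝ) ≤ K * (wordDist (S₁ : Set Γ₁) x y : ℝ)) :
    ∃ (Θ : Monoid.Coprod Γ₁ G → Monoid.Coprod Γ₂ G) (L : ℝ), 1 ≤ L ∧
      Function.Bijective Θ ∧
      (∀ γ : Γ₁, Θ (Monoid.Coprod.inl γ) = Monoid.Coprod.inl (θ γ)) ∧
      (∀ g : G, Θ (Monoid.Coprod.inr g) = Monoid.Coprod.inr g) ∧
      ∀ u v : Monoid.Coprod Γ₁ G,
        (wordDist (Monoid.Coprod.inl '' (S₁ : Set Γ₁) ∪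
            Monoid.Coprod.inr '' (T : Set G)) u v : ℝ) ≤
          L * (wordDist (Monoid.Coprod.inl '' (S₂ : Set Γ₂) ∪
            Monoid.Coprod.inr '' (T : Set G)) (Θ u) (Θ v) : ℝ) ∧
        (wordDist (Monoid.Coprod.inl '' (S₂ : Set Γ₂) ∪
            Monoid.Coprod.inr '' (T : Set G)) (Θ u) (Θ v) : ℝ) ≤
          L * (wordDist (Monoid.Coprod.inl '' (S₁ : Set Γ₁) ∪
            Monoid.Coprod.inr '' (T : Set G)) u v : ℝ) := by
  have hK0 : (0 : ℝ) ≤ K := le_trans zero_le_one hK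
  set ϑ : Γ₁ ≃ Γ₂ := Equiv.ofBijective θ hθ with hϑdef
  have hϑ1 : ϑ 1 = 1 := hθ1
  have hϑs1 : ϑ.symm 1 = 1 := by rw [← hϑ1, Equiv.symm_apply_apply]
  have hθf1 := thetaFam_one (G := G) ϑ hϑ1
  have hθf'1 := thetaFam_one (G := G) ϑ.symm hϑs1
  have hcl1 : ∀ b, Subgroup.closure (setFam Γ₁ G (S₁ : Set Γ₁) (T : Set G) b) = ⊤ :=
    setFam_closure Γ₁ G hS₁ hT
  have hcl2 : ∀ b, Subgroup.closure (setFam Γ₂ G (S₂ : Set Γ₂) (T : Set G) b) = ⊤ :=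
    setFam_closure Γ₂ G hS₂ hT
  have hbl2 : ∀ x y : Γ₁,
      (wordLength (S₂ : Set Γ₂) ((ϑ x)⁻¹ * ϑ y) : ℝ)
        ≤ K * wordLength (S₁ : Set Γ₁) (x⁻¹ * y) := fun x y => (hbl x y).2
  have hbl1 : ∀ x y : Γ₂,
      (wordLength (S₁ : Set Γ₁) ((ϑ.symm x)⁻¹ * ϑ.symm y) : ℝ)
        ≤ K * wordLength (S₂ : Set Γ₂) (x⁻¹ * y) := by
    intro x y
    have h := (hbl (ϑ.symm x) (ϑ.symm y)).1
    have ex : θ (ϑ.symm x) = x := ϑ.apply_symm_apply x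
    have ey : θ (ϑ.symm y) = y := ϑ.apply_symm_apply y
    rw [wordDist, wordDist, ex, ey] at h
    exact h
  have hH2 := hH_of_hbl (G := G) (T := (T : Set G)) hK ϑ hbl2
  have hH1 := hH_of_hbl (G := G) (T := (T : Set G)) hK ϑ.symm hbl1
  refine ⟨fun z => (eqvI Γ₂ G).symm
      (ΘI (thetaFam (G := G) ϑ) hθf1 ((eqvI Γ₁ G) z)), K, hK, ?_, ?_, ?_, ?_⟩
  · apply Function.bijective_iff_has_inverse.2
    refine ⟨fun z => (eqvI Γ₁ G).symm
        (ΘI (thetaFam (G := G) ϑ.symm) hθf'1 ((eqvI Γ₂ G) z)), ?_, ?_⟩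
    · intro u
      simp only
      rw [MulEquiv.apply_symm_apply,
        ΘI_leftInverse (thetaFam (G := G) ϑ) hθf1 (thetaFam (G := G) ϑ.symm) hθf'1
          (thetaFam_inv ϑ), MulEquiv.symm_apply_apply]
    · intro u
      simp only
      rw [MulEquiv.apply_symm_apply,
        ΘI_leftInverse (thetaFam (G := G) ϑ.symm) hθf'1 (thetaFam (G := G) ϑ) hθf1
          (thetaFam_inv' ϑ), MulEquiv.symm_apply_apply]
  · intro γ
    simp only
    rw [eqvI_inl, ΘI_of, thetaFam_upT, ← eqvI_inl Γ₂ G, MulEquiv.symm_apply_apply]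
    rfl
  · intro g
    simp only
    rw [eqvI_inr, ΘI_of, thetaFam_upF, ← eqvI_inr Γ₂ G, MulEquiv.symm_apply_apply]
  · intro u v
    have hmain2 := main_bound (thetaFam (G := G) ϑ) hθf1
      (setFam Γ₁ G (S₁ : Set Γ₁) (T : Set G)) (setFam Γ₂ G (S₂ : Set Γ₂) (T : Set G))
      hcl1 hcl2 hK0 hH2 ((eqvI Γ₁ G) u) ((eqvI Γ₁ G) v)
    have hmain1 := main_bound (thetaFam (G := G) ϑ.symm) hθf'1
      (setFam Γ₂ G (S₂ : Set Γ₂) (T : Set G)) (setFam Γ₁ G (S₁ : Set Γ₁) (T : Set G))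
      hcl2 hcl1 hK0 hH1
      (ΘI (thetaFam (G := G) ϑ) hθf1 ((eqvI Γ₁ G) u))
      (ΘI (thetaFam (G := G) ϑ) hθf1 ((eqvI Γ₁ G) v))
    -- transport the distances
    have ht1 : wordDist (⇑(Monoid.Coprod.inl : Γ₁ →* Monoid.Coprod Γ₁ G) '' (S₁ : Set Γ₁) ∪
        ⇑(Monoid.Coprod.inr : G →* Monoid.Coprod Γ₁ G) '' (T : Set G)) u v
        = wordLength (⋃ b, ⇑(Monoid.CoprodI.of : famC Γ₁ G b →* Monoid.CoprodI (famC Γ₁ G)) ''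
            (setFam Γ₁ G (S₁ : Set Γ₁) (T : Set G) b))
          (((eqvI Γ₁ G) u)⁻¹ * (eqvI Γ₁ G) v) :=
      wordDist_transport Γ₁ G _ _ u v
    have heq2 : ∀ z : Monoid.Coprod Γ₁ G,
        (eqvI Γ₂ G) ((eqvI Γ₂ G).symm (ΘI (thetaFam (G := G) ϑ) hθf1 ((eqvI Γ₁ G) z)))
          = ΘI (thetaFam (G := G) ϑ) hθf1 ((eqvI Γ₁ G) z) := fun z =>
      MulEquiv.apply_symm_apply _ _
    have ht2 : wordDist (⇑(Monoid.Coprod.inl : Γ₂ →* Monoid.Coprod Γ₂ G) '' (S₂ : Set Γ₂) ∪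
        ⇑(Monoid.Coprod.inr : G →* Monoid.Coprod Γ₂ G) '' (T : Set G))
          ((eqvI Γ₂ G).symm (ΘI (thetaFam (G := G) ϑ) hθf1 ((eqvI Γ₁ G) u)))
          ((eqvI Γ₂ G).symm (ΘI (thetaFam (G := G) ϑ) hθf1 ((eqvI Γ₁ G) v)))
        = wordLength (⋃ b, ⇑(Monoid.CoprodI.of : famC Γ₂ G b →* Monoid.CoprodI (famC Γ₂ G)) ''
            (setFam Γ₂ G (S₂ : Set Γ₂) (T : Set G) b))
          ((ΘI (thetaFam (G := G) ϑ) hθf1 ((eqvI Γ₁ G) u))⁻¹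
            * ΘI (thetaFam (G := G) ϑ) hθf1 ((eqvI Γ₁ G) v)) := by
      rw [wordDist_transport Γ₂ G, heq2, heq2]
    constructor
    · -- lower bound : d(u,v) ≤ K d(Θu, Θv)
      have hli : ∀ z : Monoid.CoprodI (famC Γ₁ G),
          ΘI (thetaFam (G := G) ϑ.symm) hθf'1 (ΘI (thetaFam (G := G) ϑ) hθf1 z) = z :=
        ΘI_leftInverse (thetaFam (G := G) ϑ) hθf1 (thetaFam (G := G) ϑ.symm) hθf'1
          (thetaFam_inv ϑ)
      rw [hli, hli] at hmain1
      rw [ht1, ht2]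
      exact hmain1
    · rw [ht1, ht2]
      exact hmain2
end
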